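/- arXiv:1010.2006 — 3 statements merged into one kernel-verified Lean document; each statement's English description precedes it below -/
import Mathlib

section
/- Descartes' rule of signs: for a real polynomial A, the number R of positive real roots (counted with multiplicity) satisfies R ≤ var(A) and R ≡ var(A) (mod 2), where var(A) is the number of sign variations in the coefficient sequence of A. -/
open Polynomial

/-- Number of sign changes in a list of reals, after discarding zeros. -/
noncomputable def signVar (l : List ℝ) : ℕ :=
  letI := Classical.decEq ℝ
  letI : DecidablePred fun p : ℝ × ℝ => p.1 * p.2 < 0 := fun _ => Classical.dec _
  let l' := l.filter (· ≠ 0)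
  (l'.zip l'.tail).countP fun p => p.1 * p.2 < 0

/-- Number of sign variations in the coefficient sequence of a real polynomial. -/
noncomputable def var (A : Polynomial ℝ) : ℕ :=
  signVar ((List.range (A.natDegree + 1)).map A.coeff)

namespace DescartesAux

open Classical in
/-- raw sign-change count, no zero filtering -/
noncomputable def chg : List ℝ → ℕ
  | [] => 0
  | [_] => 0
  | a :: b :: t => (if a * b < 0 then 1 else 0) + chg (b :: t)

@[simp] lemma chg_nil : chg [] = 0 := rfl
@[simp] lemma chg_single (a : ℝ) : chg [a] = 0 := rfl
lemma chg_cons2 (a b : ℝ) (t : List ℝ) :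
    chg (a :: b :: t) = (if a * b < 0 then 1 else 0) + chg (b :: t) := by
  simp [chg]

open Classical in
lemma signVar_eq_chg (l : List ℝ) : signVar l = chg (l.filter (· ≠ 0)) := by
  unfold signVar
  generalize (l.filter (· ≠ 0)) = m
  induction m with
  | nil => simp [chg]
  | cons a t ih =>
    cases t with
    | nil => simp [chg]
    | cons b t' =>
      simp only [List.tail_cons, List.zip_cons_cons, List.countP_cons, chg_cons2] at *
      rw [← ih]
      by_cases h : a * b < 0 <;> simp [h] <;> ring

lemma chg_le_cons (x : ℝ) (t : List ℝ) : chg t ≤ chg (x :: t) := by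
  cases t with
  | nil => simp
  | cons b t' => rw [chg_cons2]; omega

lemma chg_cons_le (x : ℝ) (t : List ℝ) : chg (x :: t) ≤ 1 + chg t := by
  cases t with
  | nil => simp
  | cons b t' => rw [chg_cons2]; split <;> omega

lemma mul_neg_trans {x y b : ℝ} (h : 0 < x * y) (h' : x * b < 0) : y * b < 0 := by
  rcases mul_pos_iff.mp h with ⟨hx, hy⟩ | ⟨hx, hy⟩ <;>
    rcases mul_neg_iff.mp h' with ⟨hx2, hb⟩ | ⟨hx2, hb⟩
  · exact mul_neg_of_pos_of_neg hy hb
  · linarith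
  · linarith
  · exact mul_neg_of_neg_of_pos hy hb

lemma chg_cons_sign {x y : ℝ} (h : 0 < x * y) (t : List ℝ) :
    chg (x :: t) = chg (y :: t) := by
  cases t with
  | nil => simp
  | cons b t' =>
    rw [chg_cons2, chg_cons2]
    congr 1
    have : x * b < 0 ↔ y * b < 0 :=
      ⟨fun h' => mul_neg_trans h h', fun h' => mul_neg_trans (by linarith [mul_comm x y]) h'⟩
    simp [this]

@[simp] lemma signVar_nil : signVar [] = 0 := by simp [signVar_eq_chg]

@[simp] lemma signVar_cons_zero (t : List ℝ) : signVar (0 :: t) = signVar t := by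
  simp [signVar_eq_chg]

lemma signVar_cons_cons_zero (x : ℝ) (t : List ℝ) :
    signVar (x :: 0 :: t) = signVar (x :: t) := by
  simp [signVar_eq_chg, List.filter_cons]

lemma le_signVar_cons (x : ℝ) (t : List ℝ) : signVar t ≤ signVar (x :: t) := by
  by_cases hx : x = 0
  · simp [hx]
  · simp only [signVar_eq_chg, List.filter_cons, hx]
    simp only [ne_eq, hx, not_false_eq_true, decide_true, if_true]
    exact chg_le_cons _ _

lemma signVar_cons_le (x : ℝ) (t : List ℝ) : signVar (x :: t) ≤ 1 + signVar t := by
  by_cases hx : x = 0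
  · simp [hx]
  · simp only [signVar_eq_chg, List.filter_cons, hx]
    simp only [ne_eq, hx, not_false_eq_true, decide_true, if_true]
    exact chg_cons_le _ _

lemma signVar_cons_sign {x y : ℝ} (h : 0 < x * y) (t : List ℝ) :
    signVar (x :: t) = signVar (y :: t) := by
  have hx : x ≠ 0 := by rintro rfl; simp at h
  have hy : y ≠ 0 := by rintro rfl; simp at h
  simp only [signVar_eq_chg, List.filter_cons, hx, hy]
  simp only [ne_eq, hx, hy, not_false_eq_true, decide_true, if_true]
  exact chg_cons_sign h _

lemma signVar_cons_cons_pos {x y : ℝ} (h : 0 < x * y) (t : List ℝ) :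
    signVar (x :: y :: t) = signVar (y :: t) := by
  have hx : x ≠ 0 := by rintro rfl; simp at h
  have hy : y ≠ 0 := by rintro rfl; simp at h
  simp only [signVar_eq_chg, List.filter_cons, hx, hy]
  simp only [ne_eq, hx, hy, not_false_eq_true, decide_true, if_true]
  rw [chg_cons2]
  simp [not_lt.mpr h.le]

lemma signVar_cons_cons_neg {x y : ℝ} (h : x * y < 0) (t : List ℝ) :
    signVar (x :: y :: t) = 1 + signVar (y :: t) := by
  have hx : x ≠ 0 := by rintro rfl; simp at h
  have hy : y ≠ 0 := by rintro rfl; simp at h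
  simp only [signVar_eq_chg, List.filter_cons, hx, hy]
  simp only [ne_eq, hx, hy, not_false_eq_true, decide_true, if_true]
  rw [chg_cons2]
  simp [h]

/-- prefix sums starting with s -/
def ps : ℝ → List ℝ → List ℝ
  | s, [] => [s]
  | s, x :: t => s :: ps (s + x) t

lemma ps_head (s : ℝ) (l : List ℝ) : ∃ r, ps s l = s :: r := by
  cases l <;> exact ⟨_, rfl⟩

/-- variation-diminishing property of prefix sums -/
lemma signVar_ps_le (l : List ℝ) : ∀ s : ℝ, signVar (ps s l) ≤ signVar (s :: l) := by
  induction l with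
  | nil => intro s; simp [ps]
  | cons x t ih =>
    intro s
    show signVar (s :: ps (s + x) t) ≤ signVar (s :: x :: t)
    obtain ⟨r, hr⟩ := ps_head (s + x) t
    by_cases hs : s = 0
    · subst hs
      simpa using ih x
    rcases lt_trichotomy (s * (s + x)) 0 with hneg | hzero | hpos
    · -- sign change from s to s+x; then x is opposite to s and s+x has sign of x
      have hsx : s * x < 0 := by nlinarith [sq_nonneg s]
      have hxx : 0 < x * (s + x) := by nlinarith [sq_nonneg s]
      calc signVar (s :: ps (s + x) t)
          = 1 + signVar (ps (s + x) t) := by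
            rw [hr]; exact signVar_cons_cons_neg hneg r
        _ ≤ 1 + signVar ((s + x) :: t) := by have := ih (s + x); omega
        _ = 1 + signVar (x :: t) := by rw [signVar_cons_sign (by linarith [mul_comm x (s+x)] : (0:ℝ) < (s+x) * x) t]
        _ = signVar (s :: x :: t) := (signVar_cons_cons_neg hsx t).symm
    · -- s + x = 0
      have hsx0 : s + x = 0 := by
        rcases mul_eq_zero.mp hzero with h | h
        · exact absurd h hs
        · exact h
      have hx : x = -s := by linarith
      have hsx : s * x < 0 := by rw [hx]; nlinarith [sq_nonneg s, mul_self_pos.mpr hs]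
      calc signVar (s :: ps (s + x) t)
          = signVar (s :: r) := by rw [hr, hsx0]; exact signVar_cons_cons_zero s r
        _ ≤ 1 + signVar r := signVar_cons_le s r
        _ = 1 + signVar (ps (s + x) t) := by rw [hr, hsx0]; simp
        _ ≤ 1 + signVar ((s + x) :: t) := by have := ih (s + x); omega
        _ = 1 + signVar t := by rw [hsx0]; simp
        _ ≤ 1 + signVar (x :: t) := by have := le_signVar_cons x t; omega
        _ = signVar (s :: x :: t) := (signVar_cons_cons_neg hsx t).symm
    · -- s and s+x same sign
      have h1 : signVar (s :: ps (s + x) t) = signVar (ps (s + x) t) := by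
        rw [hr]; exact signVar_cons_cons_pos hpos r
      rw [h1]
      refine (ih (s + x)).trans ?_
      by_cases hx0 : x = 0
      · subst hx0
        rw [add_zero, signVar_cons_cons_zero]
      rcases lt_trichotomy (s * x) 0 with hsx | h0 | hsx
      · -- x opposite to s; s+x same sign as s
        calc signVar ((s + x) :: t) = signVar (s :: t) := signVar_cons_sign (by linarith [mul_comm s (s+x)]) t
          _ ≤ 1 + signVar t := signVar_cons_le s t
          _ ≤ 1 + signVar (x :: t) := by have := le_signVar_cons x t; omega
          _ = signVar (s :: x :: t) := (signVar_cons_cons_neg hsx t).symm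
      · exact absurd (mul_eq_zero.mp h0) (by push_neg; exact ⟨hs, hx0⟩)
      · -- x same sign as s
        have hx2 : 0 < (s + x) * x := by nlinarith [mul_pos hsx hpos, sq_nonneg s]
        exact le_of_eq (by rw [signVar_cons_sign hx2 t, signVar_cons_cons_pos hsx t])

lemma chg_concat : ∀ (m : List ℝ) (b a : ℝ),
    chg (b :: (m ++ [a])) = chg (b :: m) +
      (if ((b :: m).getLast?.getD 0) * a < 0 then 1 else 0) := by
  intro m
  induction m with
  | nil => intro b a; simp [chg_cons2]; congr
  | cons x m' ih =>
    intro b a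
    rw [show (x :: m') ++ [a] = x :: (m' ++ [a]) from rfl, chg_cons2, ih x a, chg_cons2]
    rw [show (b :: x :: m').getLast? = (x :: m').getLast? from List.getLast?_cons_cons ..]
    omega

lemma chg_reverse : ∀ l : List ℝ, chg l.reverse = chg l := by
  intro l
  induction l with
  | nil => simp
  | cons x t ih =>
    cases t with
    | nil => simp
    | cons y t' =>
      have hne : (y :: t').reverse ≠ [] := by simp
      obtain ⟨b, m, hm⟩ := List.exists_cons_of_ne_nil hne
      have h1 : (x :: y :: t').reverse = b :: (m ++ [x]) := by
        rw [List.reverse_cons, hm]; rfl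
      rw [h1, chg_concat, ← hm, ih, chg_cons2]
      have h2 : (y :: t').reverse.getLast? = some y := by
        rw [List.getLast?_reverse]; rfl
      rw [h2]
      simp [mul_comm y x]
      omega

lemma signVar_reverse (l : List ℝ) : signVar l.reverse = signVar l := by
  rw [signVar_eq_chg, signVar_eq_chg, List.filter_reverse, chg_reverse]

/-- tail sums -/
def ts : List ℝ → List ℝ
  | [] => []
  | x :: t => (x + t.sum) :: ts t

lemma ps_concat : ∀ (m : List ℝ) (s y : ℝ), ps s (m ++ [y]) = ps s m ++ [s + m.sum + y] := by
  intro m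
  induction m with
  | nil => intro s y; simp [ps]
  | cons x m' ih =>
    intro s y
    show s :: ps (s + x) (m' ++ [y]) = (s :: ps (s + x) m') ++ [s + (x :: m').sum + y]
    rw [ih]
    simp only [List.cons_append, List.sum_cons, List.cons.injEq, true_and]
    congr 2
    ring

lemma ps_zero_reverse : ∀ l : List ℝ, ps 0 l.reverse = 0 :: (ts l).reverse := by
  intro l
  induction l with
  | nil => simp [ps, ts]
  | cons x t ih =>
    rw [List.reverse_cons, ps_concat, ih]
    show ((0 : ℝ) :: (ts t).reverse) ++ [0 + t.reverse.sum + x] = 0 :: ((x + t.sum) :: ts t).reverse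
    simp [List.sum_reverse, add_comm]

lemma signVar_ts_le (l : List ℝ) : signVar (ts l) ≤ signVar l := by
  calc signVar (ts l) = signVar (ts l).reverse := (signVar_reverse _).symm
    _ = signVar (0 :: (ts l).reverse) := (signVar_cons_zero _).symm
    _ = signVar (ps 0 l.reverse) := by rw [ps_zero_reverse]
    _ ≤ signVar (0 :: l.reverse) := signVar_ps_le _ 0
    _ = signVar l.reverse := signVar_cons_zero _
    _ = signVar l := signVar_reverse l

lemma mul_pos_trans {x y b : ℝ} (h : 0 < x * y) (h' : 0 < x * b) : 0 < y * b := by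
  nlinarith [mul_pos h h', sq_nonneg x, sq_nonneg y, sq_nonneg b]

@[simp] lemma signVar_singleton (x : ℝ) : signVar [x] = 0 := by
  by_cases hx : x = 0 <;> simp [signVar_eq_chg, List.filter_cons, hx]

lemma pos_of_not_neg {u : ℝ} (hu : u ≠ 0) (h : ¬ u < 0) : 0 < u :=
  lt_of_le_of_ne (not_lt.mp h) (Ne.symm hu)

lemma chg_parity : ∀ (l : List ℝ) (h : l ≠ []), (∀ x ∈ l, x ≠ 0) →
    chg l % 2 = if l.head h * l.getLast h < 0 then 1 else 0 := by
  intro l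
  induction l with
  | nil => intro h; simp at h
  | cons a t ih =>
    intro _ hz
    cases t with
    | nil =>
      have ha : a ≠ 0 := hz a (by simp)
      simp [mul_self_pos.mpr ha, not_lt.mpr (le_of_lt (mul_self_pos.mpr ha))]
    | cons b t' =>
      have ha : a ≠ 0 := hz a (by simp)
      have hb : b ≠ 0 := hz b (by simp)
      have hz' : ∀ x ∈ b :: t', x ≠ 0 := fun x hx => hz x (List.mem_cons_of_mem a hx)
      have hIH := ih (by simp) hz'
      set L := (b :: t').getLast (by simp) with hLdef
      have hL : L ≠ 0 := hz' L (List.getLast_mem _)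
      have hlast : (a :: b :: t').getLast (by simp) = L := by
        rw [List.getLast_cons (by simp)]
      rw [chg_cons2, List.head_cons, hlast]
      simp only [List.head_cons] at hIH
      by_cases hab : a * b < 0 <;> by_cases hbL : b * L < 0
      · have haL : ¬ a * L < 0 := by
          nlinarith [mul_pos_of_neg_of_neg hab hbL, sq_nonneg b]
        replace hIH : chg (b :: t') % 2 = 1 := hIH.trans (if_pos hbL)
        rw [if_pos hab, if_neg haL]
        omega
      · have hbL' : 0 < b * L := pos_of_not_neg (mul_ne_zero hb hL) hbL
        have haL : a * L < 0 := by
          have := mul_neg_trans hbL' (by linarith [mul_comm a b] : b * a < 0)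
          linarith [mul_comm L a]
        replace hIH : chg (b :: t') % 2 = 0 := hIH.trans (if_neg hbL)
        rw [if_pos hab, if_pos haL]
        omega
      · have hab' : 0 < a * b := pos_of_not_neg (mul_ne_zero ha hb) hab
        have haL : a * L < 0 := mul_neg_trans (by linarith [mul_comm a b]) hbL
        replace hIH : chg (b :: t') % 2 = 1 := hIH.trans (if_pos hbL)
        rw [if_neg hab, if_pos haL]
        omega
      · have hab' : 0 < a * b := pos_of_not_neg (mul_ne_zero ha hb) hab
        have hbL' : 0 < b * L := pos_of_not_neg (mul_ne_zero hb hL) hbL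
        have haL : ¬ a * L < 0 := by
          have := mul_pos_trans (by linarith [mul_comm a b] : 0 < b * a) hbL'
          push_neg
          nlinarith [mul_comm a L]
        replace hIH : chg (b :: t') % 2 = 0 := hIH.trans (if_neg hbL)
        rw [if_neg hab, if_neg haL]
        omega

lemma signVar_map_sign (f g : ℕ → ℝ) :
    ∀ l : List ℕ, (∀ i ∈ l, 0 < f i * g i ∨ (f i = 0 ∧ g i = 0)) →
    signVar (l.map f) = signVar (l.map g) ∧
    ∀ x y : ℝ, 0 < x * y → signVar (x :: l.map f) = signVar (y :: l.map g) := by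
  intro l
  induction l with
  | nil =>
    intro _
    refine ⟨rfl, fun x y _ => ?_⟩
    simp
  | cons i t ih =>
    intro h
    obtain ⟨ih1, ih2⟩ := ih (fun j hj => h j (List.mem_cons_of_mem i hj))
    rcases h i (by simp) with hpos | ⟨hf0, hg0⟩
    · constructor
      · simpa using ih2 (f i) (g i) hpos
      · intro x y hxy
        have hfi : f i ≠ 0 := fun h0 => by rw [h0] at hpos; simp at hpos
        have hgi : g i ≠ 0 := fun h0 => by rw [h0] at hpos; simp at hpos
        have hx : x ≠ 0 := fun h0 => by rw [h0] at hxy; simp at hxy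
        by_cases hxf : x * f i < 0
        · have hyf : y * f i < 0 := mul_neg_trans hxy hxf
          have hyg : y * g i < 0 := by
            have := mul_neg_trans hpos (by linarith [mul_comm y (f i)] : f i * y < 0)
            linarith [mul_comm (g i) y]
          show signVar (x :: f i :: t.map f) = signVar (y :: g i :: t.map g)
          rw [signVar_cons_cons_neg hxf, signVar_cons_cons_neg hyg]
          simpa using ih2 (f i) (g i) hpos
        · have hxf' : 0 < x * f i := pos_of_not_neg (mul_ne_zero hx hfi) hxf
          have hyf : 0 < y * f i := mul_pos_trans hxy hxf'
          have hyg : 0 < y * g i := by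
            have := mul_pos_trans hpos (by linarith [mul_comm y (f i)] : 0 < f i * y)
            linarith [mul_comm (g i) y]
          show signVar (x :: f i :: t.map f) = signVar (y :: g i :: t.map g)
          rw [signVar_cons_cons_pos hxf', signVar_cons_cons_pos hyg]
          simpa using ih2 (f i) (g i) hpos
    · constructor
      · show signVar (f i :: t.map f) = signVar (g i :: t.map g)
        rw [hf0, hg0, signVar_cons_zero, signVar_cons_zero]
        exact ih1
      · intro x y hxy
        show signVar (x :: f i :: t.map f) = signVar (y :: g i :: t.map g)
        rw [hf0, hg0, signVar_cons_cons_zero, signVar_cons_cons_zero]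
        exact ih2 x y hxy

lemma ts_eq_map (l : List ℝ) :
    ts l = (List.range l.length).map (fun i => (l.drop i).sum) := by
  induction l with
  | nil => simp [ts]
  | cons x t ih =>
    show (x + t.sum) :: ts t = _
    rw [List.length_cons, List.range_succ_eq_map, List.map_cons, List.map_map, ih]
    simp only [List.drop_zero, List.sum_cons, Function.comp_def, List.drop_succ_cons]

lemma drop_range' : ∀ (i m s : ℕ), List.drop i (List.range' s m) = List.range' (s + i) (m - i) := by
  intro i
  induction i with
  | zero => intro m s; simp
  | succ i ih =>
    intro m s
    cases m with
    | zero => simp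
    | succ m =>
      rw [List.range'_succ, List.drop_succ_cons, ih m (s + 1)]
      congr 1 <;> omega

lemma trailingCoeff_X_sub_C {c : ℝ} (hc : 0 < c) :
    (X - C c : ℝ[X]).trailingCoeff = -c := by
  have h0 : (X - C c : ℝ[X]).coeff 0 = -c := by simp
  have hntd : (X - C c : ℝ[X]).natTrailingDegree = 0 :=
    natTrailingDegree_eq_zero.mpr (Or.inr (by rw [h0]; exact neg_ne_zero.mpr hc.ne'))
  rw [Polynomial.trailingCoeff, hntd, h0]

lemma factor_step (A : ℝ[X]) (hA : A ≠ 0) {c : ℝ} (hc : 0 < c) (hroot : A.IsRoot c) :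
    ∃ B : ℝ[X], B ≠ 0 ∧ A = B * (X - C c) ∧ A.natDegree = B.natDegree + 1 ∧
      Multiset.card (A.roots.filter fun x => 0 < x) =
        Multiset.card (B.roots.filter fun x => 0 < x) + 1 ∧
      ((A.trailingCoeff * A.leadingCoeff < 0) ↔
        ¬ (B.trailingCoeff * B.leadingCoeff < 0)) := by
  obtain ⟨B, hB⟩ := dvd_iff_isRoot.mpr hroot
  have hB' : A = B * (X - C c) := by rw [hB, mul_comm]
  have hXc : (X - C c : ℝ[X]) ≠ 0 := X_sub_C_ne_zero c
  have hBne : B ≠ 0 := by rintro rfl; rw [zero_mul] at hB'; exact hA hB'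
  refine ⟨B, hBne, hB', ?_, ?_, ?_⟩
  · rw [hB', natDegree_mul hBne hXc, natDegree_X_sub_C]
  · rw [hB', roots_mul (hB' ▸ hA), roots_X_sub_C, Multiset.filter_add]
    rw [Multiset.filter_singleton, if_pos hc]
    simp [add_comm]
  · have ht : A.trailingCoeff = B.trailingCoeff * -c := by
      rw [hB', trailingCoeff_mul, trailingCoeff_X_sub_C hc]
    have hl : A.leadingCoeff = B.leadingCoeff := by
      rw [hB', leadingCoeff_mul, leadingCoeff_X_sub_C, mul_one]
    have htB : B.trailingCoeff ≠ 0 := trailingCoeff_nonzero_iff_nonzero.mpr hBne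
    have hlB : B.leadingCoeff ≠ 0 := leadingCoeff_ne_zero.mpr hBne
    rw [ht, hl]
    constructor
    · intro h1 h2
      nlinarith
    · intro h2
      have : 0 < B.trailingCoeff * B.leadingCoeff :=
        pos_of_not_neg (mul_ne_zero htB hlB) h2
      nlinarith

lemma var_parity (A : ℝ[X]) (hA : A ≠ 0) :
    var A % 2 = if A.trailingCoeff * A.leadingCoeff < 0 then 1 else 0 := by
  classical
  set n := A.natDegree with hn
  set k := A.natTrailingDegree with hk
  have hkn : k ≤ n := natTrailingDegree_le_natDegree A
  set l : List ℝ := (List.range (n + 1)).map A.coeff with hl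
  set fl : List ℝ := l.filter (· ≠ 0) with hfl
  have hvar : var A = chg fl := signVar_eq_chg l
  have hlead : A.coeff n = A.leadingCoeff := rfl
  have hleadne : A.leadingCoeff ≠ 0 := leadingCoeff_ne_zero.mpr hA
  have htrailne : A.trailingCoeff ≠ 0 := trailingCoeff_nonzero_iff_nonzero.mpr hA
  -- last element
  have hsplit : l = (List.range n).map A.coeff ++ [A.leadingCoeff] := by
    rw [hl, List.range_succ, List.map_append, List.map_singleton, hlead]
  have hlast : fl.getLast? = some A.leadingCoeff := by
    rw [hfl, hsplit, List.filter_append]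
    have : List.filter (fun x => decide (x ≠ 0)) [A.leadingCoeff] = [A.leadingCoeff] := by
      simp [hleadne]
    rw [this, List.getLast?_append_cons]
    rfl
  -- head element
  have hhead : ∃ rest, fl = A.trailingCoeff :: rest := by
    have h1 : n + 1 = k + (n + 1 - k) := by omega
    have h2 : n + 1 - k = (n - k) + 1 := by omega
    have hr : List.range (n + 1) =
        List.range k ++ (List.range ((n - k) + 1)).map (fun x => k + x) := by
      rw [h1, List.range_add, h2]
    have hz : List.filter (fun x => decide (x ≠ 0)) ((List.range k).map A.coeff) = [] := by
      rw [List.filter_eq_nil_iff]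
      intro a ha
      obtain ⟨i, hi, rfl⟩ := List.mem_map.mp ha
      have : A.coeff i = 0 :=
        coeff_eq_zero_of_lt_natTrailingDegree (List.mem_range.mp hi)
      simp [this]
    refine ⟨List.filter (fun x => decide (x ≠ 0))
      ((List.map (fun x => A.coeff (k + x)) (List.map Nat.succ (List.range (n - k))))), ?_⟩
    rw [hfl, hl, hr, List.map_append, List.filter_append, hz, List.nil_append,
      List.range_succ_eq_map, List.map_cons, List.map_cons, List.map_map]
    have hck : A.coeff (k + 0) = A.trailingCoeff := by rw [Nat.add_zero]; rfl
    rw [List.filter_cons, hck]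
    simp only [ne_eq, htrailne, not_false_eq_true, decide_true, if_true]
    rfl
  obtain ⟨rest, hrest⟩ := hhead
  have hne : fl ≠ [] := by rw [hrest]; simp
  have hzf : ∀ x ∈ fl, x ≠ 0 := by
    intro x hx
    have := List.of_mem_filter hx
    simpa using this
  have hh : fl.head hne = A.trailingCoeff := by
    have h1 : fl.head? = some A.trailingCoeff := by rw [hrest]; rfl
    have h2 := List.head?_eq_head hne
    rw [h2] at h1
    exact Option.some.inj h1
  have hgl : fl.getLast hne = A.leadingCoeff := by
    have := List.getLast?_eq_getLast (l := fl) hne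
    rw [this] at hlast
    exact Option.some.inj hlast
  rw [hvar, chg_parity fl hne hzf, hh, hgl]

lemma pos_trailing_mul_leading (A : ℝ[X]) (hA : A ≠ 0)
    (h0 : (A.roots.filter fun x => 0 < x) = 0) :
    0 < A.trailingCoeff * A.leadingCoeff := by
  classical
  set k := A.natTrailingDegree with hk
  obtain ⟨C', hC'⟩ : (X : ℝ[X]) ^ k ∣ A :=
    X_pow_dvd_iff.mpr (fun d hd => coeff_eq_zero_of_lt_natTrailingDegree hd)
  have hCne : C' ≠ 0 := by rintro rfl; rw [mul_zero] at hC'; exact hA hC'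
  have hcoeff0 : C'.coeff 0 = A.trailingCoeff := by
    have := coeff_X_pow_mul C' k 0
    rw [← hC'] at this
    rw [← this]
    simp only [Nat.zero_add]
    rfl
  have heval0 : C'.eval 0 = A.trailingCoeff := by
    rw [← coeff_zero_eq_eval_zero, hcoeff0]
  have htrailne : A.trailingCoeff ≠ 0 := trailingCoeff_nonzero_iff_nonzero.mpr hA
  have hnr : ∀ x : ℝ, 0 ≤ x → C'.eval x ≠ 0 := by
    intro x hx hev
    rcases eq_or_lt_of_le hx with rfl | hx'
    · rw [heval0] at hev; exact htrailne hev
    · have hxr : x ∈ C'.roots := (mem_roots hCne).mpr hev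
      have hdvd : C' ∣ A := Dvd.intro_left _ hC'.symm
      have hle : C'.roots ≤ A.roots := roots.le_of_dvd hA hdvd
      have hxA : x ∈ A.roots := Multiset.mem_of_le hle hxr
      have : x ∈ A.roots.filter fun y => 0 < y := Multiset.mem_filter.mpr ⟨hxA, hx'⟩
      rw [h0] at this
      simp at this
  have hcont : Continuous fun x : ℝ => C'.eval x := C'.continuous
  have hsign : ∀ x : ℝ, 0 ≤ x → 0 < C'.eval 0 * C'.eval x := by
    intro x hx
    by_contra hcon
    have hne : C'.eval 0 * C'.eval x ≠ 0 := mul_ne_zero (hnr 0 le_rfl) (hnr x hx)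
    have hlt : C'.eval 0 * C'.eval x < 0 := by
      rcases hne.lt_or_gt with h | h
      · exact h
      · exact absurd h hcon
    rcases mul_neg_iff.mp hlt with ⟨h1, h2⟩ | ⟨h1, h2⟩
    · obtain ⟨y, hy, hy0⟩ := intermediate_value_Icc' hx hcont.continuousOn
        (Set.mem_Icc.mpr ⟨h2.le, h1.le⟩)
      exact hnr y hy.1 hy0
    · obtain ⟨y, hy, hy0⟩ := intermediate_value_Icc hx hcont.continuousOn
        (Set.mem_Icc.mpr ⟨h1.le, h2.le⟩)
      exact hnr y hy.1 hy0
  have hleadA : A.leadingCoeff = C'.leadingCoeff := by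
    rw [hC', leadingCoeff_mul, leadingCoeff_X_pow, one_mul]
  by_cases hdeg : C'.natDegree = 0
  · have hCc : C' = C (C'.coeff 0) := eq_C_of_natDegree_eq_zero hdeg
    have : C'.leadingCoeff = C'.coeff 0 := by
      rw [Polynomial.leadingCoeff, hdeg]
    rw [hleadA, this, hcoeff0]
    exact mul_self_pos.mpr htrailne
  · have hdeg' : 0 < C'.degree := natDegree_pos_iff_degree_pos.mp (Nat.pos_of_ne_zero hdeg)
    rcases (leadingCoeff_ne_zero.mpr hCne).lt_or_gt with hlc | hlc
    · have htd := tendsto_atBot_of_leadingCoeff_nonpos C' hdeg' hlc.le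
      obtain ⟨x, hx1, hx2⟩ := ((htd.eventually_lt_atBot 0).and
        (Filter.eventually_ge_atTop (0:ℝ))).exists
      have := hsign x hx2
      have he0 : C'.eval 0 < 0 := by nlinarith
      rw [hleadA, ← heval0]
      exact mul_pos_of_neg_of_neg he0 hlc
    · have htd := tendsto_atTop_of_leadingCoeff_nonneg C' hdeg' hlc.le
      obtain ⟨x, hx1, hx2⟩ := ((htd.eventually_gt_atTop 0).and
        (Filter.eventually_ge_atTop (0:ℝ))).exists
      have := hsign x hx2
      have he0 : 0 < C'.eval 0 := by nlinarith
      rw [hleadA, ← heval0]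
      exact mul_pos he0 hlc

lemma roots_parity : ∀ n (A : ℝ[X]), A ≠ 0 → A.natDegree = n →
    Multiset.card (A.roots.filter fun x => 0 < x) % 2 =
      if A.trailingCoeff * A.leadingCoeff < 0 then 1 else 0 := by
  intro n
  induction n using Nat.strong_induction_on with
  | _ n ih =>
    intro A hA hdeg
    by_cases h0 : (A.roots.filter fun x => 0 < x) = 0
    · rw [h0]
      have hpos := pos_trailing_mul_leading A hA h0
      rw [if_neg (not_lt.mpr hpos.le)]
      simp
    · obtain ⟨c, hc⟩ := Multiset.exists_mem_of_ne_zero h0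
      obtain ⟨hcr, hcpos⟩ := Multiset.mem_filter.mp hc
      have hroot : A.IsRoot c := (mem_roots hA).mp hcr
      obtain ⟨B, hBne, hB', hdegAB, hcard, hflip⟩ := factor_step A hA hcpos hroot
      have hIH := ih B.natDegree (by omega) B hBne rfl
      rw [hcard]
      by_cases hB2 : B.trailingCoeff * B.leadingCoeff < 0
      · rw [if_pos hB2] at hIH
        rw [if_neg (fun hcon => (hflip.mp hcon) hB2)]
        omega
      · rw [if_neg hB2] at hIH
        rw [if_pos (hflip.mpr hB2)]
        omega

lemma var_le_var_mul_X_sub_C (B : ℝ[X]) (hB : B ≠ 0) {c : ℝ} (hc : 0 < c) :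
    var B ≤ var (B * (X - C c)) := by
  classical
  set A : ℝ[X] := B * (X - C c) with hAdef
  have hXc : (X - C c : ℝ[X]) ≠ 0 := X_sub_C_ne_zero c
  have hA : A ≠ 0 := mul_ne_zero hB hXc
  set n := B.natDegree with hn
  have hdegA : A.natDegree = n + 1 := by
    rw [hAdef, natDegree_mul hB hXc, natDegree_X_sub_C]
  set w : List ℝ := (List.range' 1 (n + 1)).map (fun j => c ^ j * A.coeff j) with hw
  -- Step 1 : var B = signVar of scaled coefficients
  have hstep1 : var B = signVar ((List.range (n + 1)).map (fun i => c ^ (i + 1) * B.coeff i)) := by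
    refine (signVar_map_sign B.coeff (fun i => c ^ (i + 1) * B.coeff i)
      (List.range (n + 1)) ?_).1
    intro i _
    by_cases hbi : B.coeff i = 0
    · right
      refine ⟨hbi, ?_⟩
      show c ^ (i + 1) * B.coeff i = 0
      rw [hbi, mul_zero]
    · left
      show 0 < B.coeff i * (c ^ (i + 1) * B.coeff i)
      have h1 : 0 < c ^ (i + 1) := pow_pos hc (i + 1)
      have h2 : 0 < B.coeff i * B.coeff i := mul_self_pos.mpr hbi
      nlinarith
  -- telescoping
  have hcoeffA : ∀ u : ℕ, A.coeff (u + 1) = B.coeff u - B.coeff (u + 1) * c :=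
    fun u => coeff_mul_X_sub_C
  have htel : ∀ m s, 1 ≤ s → s + m = n + 2 →
      ((List.range' s m).map (fun j => c ^ j * A.coeff j)).sum = c ^ s * B.coeff (s - 1) := by
    intro m
    induction m with
    | zero =>
      intro s h1 h2
      have hs : s - 1 = n + 1 := by omega
      have : B.coeff (s - 1) = 0 := by
        rw [hs]; exact coeff_eq_zero_of_natDegree_lt (by omega)
      simp [this]
    | succ m ihm =>
      intro s h1 h2
      rw [List.range'_succ, List.map_cons, List.sum_cons, ihm (s + 1) (by omega) (by omega)]
      obtain ⟨u, rfl⟩ : ∃ u, s = u + 1 := ⟨s - 1, by omega⟩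
      rw [hcoeffA u]
      have h3 : u + 1 + 1 - 1 = u + 1 := rfl
      have h4 : u + 1 - 1 = u := rfl
      rw [h3, h4]
      ring
  -- Step 3 : scaled B-coefficients are the tail sums of w
  have hlenw : w.length = n + 1 := by rw [hw, List.length_map, List.length_range']
  have hstep3 : (List.range (n + 1)).map (fun i => c ^ (i + 1) * B.coeff i) = ts w := by
    rw [ts_eq_map, hlenw]
    apply List.map_congr_left
    intro i hi
    have hi' : i < n + 1 := List.mem_range.mp hi
    have hdrop : w.drop i = (List.range' (1 + i) (n + 1 - i)).map (fun j => c ^ j * A.coeff j) := by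
      rw [hw, ← List.map_drop, drop_range']
    rw [hdrop, htel (n + 1 - i) (1 + i) (by omega) (by omega)]
    have : 1 + i - 1 = i := by omega
    rw [this]
    ring_nf
  -- Step 4
  have hstep4 : signVar w = signVar ((List.range' 1 (n + 1)).map A.coeff) := by
    refine (signVar_map_sign (fun j => c ^ j * A.coeff j) A.coeff (List.range' 1 (n + 1)) ?_).1
    intro j _
    by_cases haj : A.coeff j = 0
    · right
      refine ⟨?_, haj⟩
      show c ^ j * A.coeff j = 0
      rw [haj, mul_zero]
    · left
      show 0 < (c ^ j * A.coeff j) * A.coeff j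
      have h1 : 0 < c ^ j := pow_pos hc j
      have h2 : 0 < A.coeff j * A.coeff j := mul_self_pos.mpr haj
      nlinarith
  -- Step 5
  have hstep5 : (List.range (n + 2)).map A.coeff =
      A.coeff 0 :: (List.range' 1 (n + 1)).map A.coeff := by
    rw [List.range_eq_range', List.range'_succ, List.map_cons]
  calc var B = signVar (ts w) := by rw [hstep1, hstep3]
    _ ≤ signVar w := signVar_ts_le w
    _ = signVar ((List.range' 1 (n + 1)).map A.coeff) := hstep4
    _ ≤ signVar ((List.range (n + 2)).map A.coeff) := by
        rw [hstep5]; exact le_signVar_cons _ _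
    _ = var A := by rw [var, hdegA]

lemma main_ineq : ∀ n (A : ℝ[X]), A ≠ 0 → A.natDegree = n →
    Multiset.card (A.roots.filter fun x => 0 < x) ≤ var A := by
  intro n
  induction n using Nat.strong_induction_on with
  | _ n ih =>
    intro A hA hdeg
    by_cases h0 : (A.roots.filter fun x => 0 < x) = 0
    · rw [h0]; simp
    · obtain ⟨c, hc⟩ := Multiset.exists_mem_of_ne_zero h0
      obtain ⟨hcr, hcpos⟩ := Multiset.mem_filter.mp hc
      have hroot : A.IsRoot c := (mem_roots hA).mp hcr
      obtain ⟨B, hBne, hB', hdegAB, hcard, hflip⟩ := factor_step A hA hcpos hroot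
      have hIH := ih B.natDegree (by omega) B hBne rfl
      have hW : var B ≤ var A := by
        rw [hB']
        exact var_le_var_mul_X_sub_C B hBne hcpos
      have hpA := var_parity A hA
      have hpB := var_parity B hBne
      have hdiff : var B % 2 ≠ var A % 2 := by
        by_cases hB2 : B.trailingCoeff * B.leadingCoeff < 0
        · rw [if_pos hB2] at hpB
          rw [if_neg (fun hcon => (hflip.mp hcon) hB2)] at hpA
          omega
        · rw [if_neg hB2] at hpB
          rw [if_pos (hflip.mpr hB2)] at hpA
          omega
      rw [hcard]
      omega

end DescartesAux

theorem descartes_rule_of_signs (A : Polynomial ℝ) (hA : A ≠ 0) :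
    (A.roots.filter fun x => 0 < x).card ≤ var A ∧
    (A.roots.filter fun x => 0 < x).card ≡ var A [MOD 2] := by
  constructor
  · exact DescartesAux.main_ineq A.natDegree A hA rfl
  · show _ % 2 = _ % 2
    rw [DescartesAux.roots_parity A.natDegree A hA rfl, DescartesAux.var_parity A hA]
end

section
/- If a real polynomial A has var(A) = 0 sign variations in its coefficients, then A has no positive real roots; if var(A) = 1, then A has exactly one positive real root. -/
open Polynomial

noncomputable def pairsNeg (l : List ℝ) : ℕ :=
  (l.zip l.tail).countP fun p => decide (p.1 * p.2 < 0)

lemma signVar_eq (l : List ℝ) : signVar l = pairsNeg (l.filter (fun x => decide (x ≠ 0))) := by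
  unfold signVar pairsNeg
  congr 1

@[simp] lemma pairsNeg_nil : pairsNeg [] = 0 := rfl
@[simp] lemma pairsNeg_single (x : ℝ) : pairsNeg [x] = 0 := rfl
lemma pairsNeg_cons_cons (x y : ℝ) (t : List ℝ) :
    pairsNeg (x :: y :: t) = (if x * y < 0 then 1 else 0) + pairsNeg (y :: t) := by
  unfold pairsNeg
  simp [List.countP_cons]
  by_cases h : x * y < 0 <;> simp [h] <;> ring

lemma sign_trans {x y b : ℝ} (hy : y ≠ 0) (h1 : 0 < x * y) (h2 : 0 < y * b) : 0 < x * b := by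
  have hy2 : 0 < y * y := mul_self_pos.mpr hy
  nlinarith [mul_pos h1 h2]

lemma pairsNeg_head (l : List ℝ) : ∀ x : ℝ, (∀ a ∈ x :: l, a ≠ 0) →
    pairsNeg (x :: l) = 0 → ∀ b ∈ x :: l, 0 < x * b := by
  induction l with
  | nil =>
    intro x hnz h b hb
    simp only [List.mem_singleton] at hb
    rw [hb]
    exact mul_self_pos.mpr (hnz x (by simp))
  | cons y t ih =>
    intro x hnz h b hb
    rw [pairsNeg_cons_cons] at h
    have h1 : ¬ (x * y < 0) := by
      by_contra hc; simp [hc] at h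
    have h2 : pairsNeg (y :: t) = 0 := by
      by_cases hc : x * y < 0 <;> simp [hc] at h <;> omega
    have hx : x ≠ 0 := hnz x (by simp)
    have hy : y ≠ 0 := hnz y (by simp)
    have hxy : 0 < x * y := lt_of_le_of_ne (not_lt.mp h1) (Ne.symm (mul_ne_zero hx hy))
    rcases List.mem_cons.mp hb with rfl | hb'
    · exact mul_self_pos.mpr hx
    · exact sign_trans hy hxy (ih y (fun a ha => hnz a (List.mem_cons_of_mem _ ha)) h2 b hb')

lemma pairsNeg_pairwise {l : List ℝ} (hnz : ∀ a ∈ l, a ≠ 0) (h : pairsNeg l = 0) :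
    ∀ a ∈ l, ∀ b ∈ l, 0 < a * b := by
  cases l with
  | nil => intro a ha; simp at ha
  | cons x t =>
    intro a ha b hb
    have hha := pairsNeg_head t x hnz h a ha
    have hhb := pairsNeg_head t x hnz h b hb
    have hx : x ≠ 0 := hnz x (by simp)
    have hx2 : 0 < x * x := mul_self_pos.mpr hx
    nlinarith [mul_pos hha hhb]

lemma pairsNeg_cons (x : ℝ) (l : List ℝ) :
    pairsNeg (x :: l) =
      (match l.head? with | some y => if x * y < 0 then 1 else 0 | none => 0) + pairsNeg l := by
  cases l with
  | nil => simp
  | cons y t => rw [pairsNeg_cons_cons]; rfl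

lemma pairsNeg_one_split : ∀ l : List ℝ, pairsNeg l = 1 →
    ∃ (l1' : List ℝ) (u v : ℝ) (l2' : List ℝ),
      l = (l1' ++ [u]) ++ (v :: l2') ∧ u * v < 0 ∧
      pairsNeg (l1' ++ [u]) = 0 ∧ pairsNeg (v :: l2') = 0 := by
  intro l
  induction l with
  | nil => intro h; simp at h
  | cons x t ih =>
    intro h
    cases t with
    | nil => simp at h
    | cons y t' =>
      rw [pairsNeg_cons_cons] at h
      by_cases hxy : x * y < 0
      · refine ⟨[], x, y, t', by simp, hxy, by simp, ?_⟩
        simp [hxy] at h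
        omega
      · have h1 : pairsNeg (y :: t') = 1 := by simp [hxy] at h; omega
        obtain ⟨l1', u, v, l2', heq, huv, hp1, hp2⟩ := ih h1
        refine ⟨x :: l1', u, v, l2', by simp [heq], huv, ?_, hp2⟩
        have hhead : (l1' ++ [u]).head? = some y := by
          have : ((l1' ++ [u]) ++ (v :: l2')).head? = some y := by rw [← heq]; rfl
          rwa [List.head?_append_of_ne_nil _ (by simp)] at this
        rw [List.cons_append, pairsNeg_cons, hhead, hp1]
        simp [hxy]

lemma filter_eq_append {α : Type*} {p : α → Bool} :
    ∀ (L : List α) (l1 l2 : List α), L.filter p = l1 ++ l2 →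
      ∃ L1 L2, L = L1 ++ L2 ∧ L1.filter p = l1 ∧ L2.filter p = l2 := by
  intro L
  induction L with
  | nil =>
    intro l1 l2 h
    simp only [List.filter_nil] at h
    obtain ⟨h1, h2⟩ := (List.append_eq_nil_iff).mp h.symm
    exact ⟨[], [], by simp, by simp [h1], by simp [h2]⟩
  | cons x L' ih =>
    intro l1 l2 h
    by_cases hp : p x
    · rw [List.filter_cons_of_pos hp] at h
      cases l1 with
      | nil =>
        exact ⟨[], x :: L', by simp, rfl, by rw [List.filter_cons_of_pos hp]; simpa using h⟩
      | cons a l1' =>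
        simp only [List.cons_append, List.cons.injEq] at h
        obtain ⟨rfl, h2⟩ := h
        obtain ⟨L1, L2, rfl, hf1, hf2⟩ := ih l1' l2 h2
        exact ⟨x :: L1, L2, rfl, by rw [List.filter_cons_of_pos hp, hf1], hf2⟩
    · rw [List.filter_cons_of_neg hp] at h
      obtain ⟨L1, L2, rfl, hf1, hf2⟩ := ih l1 l2 h
      exact ⟨x :: L1, L2, rfl, by rw [List.filter_cons_of_neg hp, hf1], hf2⟩

-- positivity of eval for nonneg coeffs
lemma evalPos (A : ℝ[X]) (hA : A ≠ 0) (h : ∀ i, 0 ≤ A.coeff i) {x : ℝ} (hx : 0 < x) :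
    0 < A.eval x := by
  rw [eval_eq_sum_range]
  apply Finset.sum_pos'
  · exact fun i _ => mul_nonneg (h i) (pow_nonneg hx.le i)
  · refine ⟨A.natDegree, Finset.self_mem_range_succ _, ?_⟩
    have hlc : A.coeff A.natDegree ≠ 0 := by
      rw [← leadingCoeff]; exact leadingCoeff_ne_zero.mpr hA
    exact mul_pos (lt_of_le_of_ne (h _) (Ne.symm hlc)) (pow_pos hx _)

lemma sign_cross {a u v b : ℝ} (h1 : 0 < a * u) (h2 : u * v < 0) (h3 : 0 < v * b) :
    a * b < 0 := by
  by_contra hc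
  push_neg at hc
  have e1 : 0 < (a * u) * (v * b) := mul_pos h1 h3
  nlinarith [mul_nonpos_of_nonneg_of_nonpos hc h2.le]

-- membership facts about the coefficient list
lemma mem_coeffList_filter {A : ℝ[X]} {i : ℕ} (hi : i ≤ A.natDegree) (h : A.coeff i ≠ 0) :
    A.coeff i ∈ ((List.range (A.natDegree + 1)).map A.coeff).filter (fun x => decide (x ≠ 0)) := by
  rw [List.mem_filter]
  refine ⟨List.mem_map.mpr ⟨i, List.mem_range.mpr (by omega), rfl⟩, by simpa using h⟩

lemma coeffList_filter_nonzero {A : ℝ[X]} {a : ℝ}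
    (ha : a ∈ ((List.range (A.natDegree + 1)).map A.coeff).filter (fun x => decide (x ≠ 0))) :
    a ≠ 0 := by
  simpa using (List.mem_filter.mp ha).2

lemma var_one_struct (A : ℝ[X]) (hA : A ≠ 0)
    (h : pairsNeg (((List.range (A.natDegree + 1)).map A.coeff).filter
      (fun x => decide (x ≠ 0))) = 1) :
    ∃ m : ℕ, 0 < m ∧ m ≤ A.natDegree ∧
      (∀ i, i < m → A.coeff i * A.leadingCoeff ≤ 0) ∧
      (∀ i, m ≤ i → 0 ≤ A.coeff i * A.leadingCoeff) ∧
      (∃ i0, i0 < m ∧ A.coeff i0 * A.leadingCoeff < 0) := by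
  set n := A.natDegree with hn
  set L : List ℝ := (List.range (n + 1)).map A.coeff with hL
  have hLlen : L.length = n + 1 := by simp [hL]
  have hLget : ∀ (i : ℕ) (h : i < L.length), L[i] = A.coeff i := by
    intro i h
    simp [hL]
  obtain ⟨l1', u, v, l2', hsplit, huv, hp1, hp2⟩ := pairsNeg_one_split _ h
  set l1 : List ℝ := l1' ++ [u] with hl1
  set l2 : List ℝ := v :: l2' with hl2
  obtain ⟨L1, L2, hLeq, hf1, hf2⟩ := filter_eq_append L l1 l2 hsplit
  set m := L1.length with hm
  -- nonzero elements of l1, l2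
  have hnz1 : ∀ a ∈ l1, a ≠ 0 := by
    intro a ha
    rw [← hf1] at ha
    simpa using (List.mem_filter.mp ha).2
  have hnz2 : ∀ a ∈ l2, a ≠ 0 := by
    intro a ha
    rw [← hf2] at ha
    simpa using (List.mem_filter.mp ha).2
  have hpw1 := pairsNeg_pairwise hnz1 hp1
  have hpw2 := pairsNeg_pairwise hnz2 hp2
  have humem : u ∈ l1 := by simp [hl1]
  have hvmem : v ∈ l2 := by simp [hl2]
  have hcross : ∀ a ∈ l1, ∀ b ∈ l2, a * b < 0 := fun a ha b hb =>
    sign_cross (hpw1 a ha u humem) huv (hpw2 v hvmem b hb)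
  -- length facts
  have hmlen : m ≤ n + 1 := by
    have := congrArg List.length hLeq
    simp [hLlen] at this
    omega
  have hL2len : L2.length = n + 1 - m := by
    have := congrArg List.length hLeq
    simp [hLlen] at this
    omega
  have hmn : m ≤ n := by
    by_contra hc
    have : L2.length = 0 := by omega
    have hL2nil : L2 = [] := List.length_eq_zero_iff.mp this
    rw [hL2nil] at hf2
    simp [hl2] at hf2
  -- membership: indices below m go to l1, above to l2
  have hmem1 : ∀ i, i < m → A.coeff i ≠ 0 → A.coeff i ∈ l1 := by
    intro i hi hne
    have hiL1 : i < L1.length := hi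
    have hiL : i < L.length := by rw [hLeq]; simp; omega
    have hgeq : L1[i] = A.coeff i := by
      have h1 : (L1 ++ L2)[i]'(by rw [← hLeq]; exact hiL) = L1[i] :=
        List.getElem_append_left hiL1
      have h2 : (L1 ++ L2)[i]'(by rw [← hLeq]; exact hiL) = L[i] :=
        List.getElem_of_eq hLeq.symm _
      rw [← h1, h2, hLget i hiL]
    rw [← hf1, ← hgeq]
    exact List.mem_filter.mpr ⟨List.getElem_mem hiL1, by simp [hgeq, hne]⟩
  have hmem2 : ∀ i, m ≤ i → i ≤ n → A.coeff i ≠ 0 → A.coeff i ∈ l2 := by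
    intro i hmi hin hne
    have hiL : i < L.length := by omega
    have hiL2 : i - m < L2.length := by omega
    have hget : L2[i - m] = A.coeff i := by
      have h1 : (L1 ++ L2)[i]'(by rw [← hLeq]; exact hiL) = L2[i - m] :=
        List.getElem_append_right (by omega)
      have h2 : (L1 ++ L2)[i]'(by rw [← hLeq]; exact hiL) = L[i] :=
        List.getElem_of_eq hLeq.symm _
      rw [← h1, h2, hLget i hiL]
    rw [← hf2, ← hget]
    exact List.mem_filter.mpr ⟨List.getElem_mem hiL2, by simp [hget, hne]⟩
  -- elements of l1 come from indices < m
  have hsrc1 : ∀ a ∈ l1, ∃ i, i < m ∧ A.coeff i = a := by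
    intro a ha
    rw [← hf1] at ha
    have ha' : a ∈ L1 := (List.mem_filter.mp ha).1
    obtain ⟨j, hj, hje⟩ := List.mem_iff_getElem.mp ha'
    have hjL : j < L.length := by rw [hLeq]; simp; omega
    refine ⟨j, hj, ?_⟩
    have h1 : (L1 ++ L2)[j]'(by rw [← hLeq]; exact hjL) = L1[j] :=
      List.getElem_append_left hj
    have h2 : (L1 ++ L2)[j]'(by rw [← hLeq]; exact hjL) = L[j] :=
      List.getElem_of_eq hLeq.symm _
    rw [← hje, ← h1, h2, hLget j hjL]
  -- m ≥ 1
  have hm1 : 0 < m := by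
    rcases hsrc1 u humem with ⟨i, hi, _⟩
    omega
  -- leading coeff in l2
  have hlcne : A.coeff n ≠ 0 := by
    rw [hn, ← leadingCoeff]
    exact leadingCoeff_ne_zero.mpr hA
  have hlcmem : A.coeff n ∈ l2 := hmem2 n hmn le_rfl hlcne
  refine ⟨m, hm1, hmn, ?_, ?_, ?_⟩
  · intro i hi
    by_cases hne : A.coeff i = 0
    · simp [hne]
    · exact le_of_lt (hcross _ (hmem1 i hi hne) _ hlcmem)
  · intro i hmi
    by_cases hin : i ≤ n
    · by_cases hne : A.coeff i = 0
      · simp [hne]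
      · exact le_of_lt (hpw2 _ (hmem2 i hmi hin hne) _ hlcmem)
    · have : A.coeff i = 0 := coeff_eq_zero_of_natDegree_lt (by omega)
      simp [this]
  · obtain ⟨i0, hi0, hi0e⟩ := hsrc1 u humem
    refine ⟨i0, hi0, ?_⟩
    rw [hi0e]
    exact hcross _ humem _ hlcmem

lemma key (A : ℝ[X]) (hA : A ≠ 0) (hlc : 0 < A.leadingCoeff)
    (m : ℕ) (hm0 : 0 < m) (hmn : m ≤ A.natDegree)
    (hneg : ∀ i, i < m → A.coeff i ≤ 0) (hpos : ∀ i, m ≤ i → 0 ≤ A.coeff i)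
    (i0 : ℕ) (hi0 : i0 < m) (hi0n : A.coeff i0 < 0) :
    (A.roots.filter fun x => 0 < x).card = 1 := by
  classical
  set n := A.natDegree with hn
  -- the auxiliary polynomial B
  set B : ℝ[X] := X * derivative A - C (m : ℝ) * A with hB
  have hBcoeff : ∀ i, B.coeff i = ((i : ℝ) - m) * A.coeff i := by
    intro i
    cases i with
    | zero =>
      simp [hB, coeff_sub, coeff_C_mul, mul_coeff_zero]
    | succ j =>
      rw [hB, coeff_sub, coeff_C_mul, coeff_X_mul, coeff_derivative]
      push_cast
      ring
  have hBnn : ∀ i, 0 ≤ B.coeff i := by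
    intro i
    rw [hBcoeff]
    by_cases hi : i < m
    · have h1 : (i : ℝ) ≤ m := by exact_mod_cast hi.le
      nlinarith [hneg i hi]
    · have h1 : (m : ℝ) ≤ i := by exact_mod_cast (by omega : m ≤ i)
      nlinarith [hpos i (by omega)]
  have hBne : B ≠ 0 := by
    intro hc
    have := hBcoeff i0
    rw [hc, coeff_zero] at this
    have h1 : ((i0 : ℝ) - m) < 0 := by
      have : (i0 : ℝ) < m := by exact_mod_cast hi0
      linarith
    have := mul_pos_of_neg_of_neg h1 hi0n
    linarith [this.trans_eq rfl]
  have hBeval : ∀ x : ℝ, 0 < x → 0 < B.eval x := fun x hx => evalPos B hBne hBnn hx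
  have hBev : ∀ x : ℝ, B.eval x = x * eval x (derivative A) - m * A.eval x := by
    intro x; simp [hB]
  -- every positive root has positive derivative
  have hA' : ∀ r : ℝ, 0 < r → A.eval r = 0 → 0 < eval r (derivative A) := by
    intro r hr hroot
    have h1 := hBeval r hr
    rw [hBev, hroot, mul_zero, sub_zero] at h1
    exact (mul_pos_iff_of_pos_left hr).mp h1
  -- uniqueness of positive roots
  have huniq : ∀ r r' : ℝ, 0 < r → 0 < r' → A.eval r = 0 → A.eval r' = 0 → r = r' := by
    have main : ∀ r r' : ℝ, 0 < r → r < r' → A.eval r = 0 → A.eval r' = 0 → False := by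
      intro r r' hr hrr' hroot hroot'
      obtain ⟨m', rfl⟩ : ∃ m', m = m' + 1 := ⟨m - 1, by omega⟩
      have hcont : ContinuousOn (fun x : ℝ => A.eval x * (x ^ (m' + 1))⁻¹) (Set.Icc r r') := by
        apply ContinuousOn.mul (Polynomial.continuous A).continuousOn
        apply ContinuousOn.inv₀ (continuous_pow _).continuousOn
        intro x hx
        exact pow_ne_zero _ (ne_of_gt (lt_of_lt_of_le hr hx.1))
      have heq : (fun x : ℝ => A.eval x * (x ^ (m' + 1))⁻¹) r
          = (fun x : ℝ => A.eval x * (x ^ (m' + 1))⁻¹) r' := by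
        simp [hroot, hroot']
      have hderiv : ∀ x ∈ Set.Ioo r r',
          HasDerivAt (fun x : ℝ => A.eval x * (x ^ (m' + 1))⁻¹)
            (B.eval x / x ^ (m' + 2)) x := by
        intro x hx
        have hxpos : 0 < x := lt_trans hr hx.1
        have h1 := Polynomial.hasDerivAt A x
        have h2 := (hasDerivAt_pow (m' + 1) x).inv (pow_ne_zero _ hxpos.ne')
        have h3 := h1.mul h2
        convert h3 using 1
        · rfl
        · rfl
        · rfl
        rw [hBev]
        have hxne : x ≠ 0 := hxpos.ne'
        simp only [Pi.inv_apply, Nat.add_sub_cancel]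
        field_simp
        ring
      obtain ⟨c, hc, hc0⟩ := exists_hasDerivAt_eq_zero hrr' hcont heq hderiv
      have hcpos : 0 < c := lt_trans hr hc.1
      have := hBeval c hcpos
      rw [_root_.div_eq_zero_iff] at hc0
      rcases hc0 with h | h
      · linarith
      · exact absurd h (pow_ne_zero _ hcpos.ne')
    intro r r' hr hr' h1 h2
    rcases lt_trichotomy r r' with h | h | h
    · exact absurd (main r r' hr h h1 h2) id
    · exact h
    · exact absurd (main r' r hr' h h2 h1) id
  -- existence of a positive root
  have hex : ∃ r : ℝ, 0 < r ∧ A.eval r = 0 := by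
    set k := A.natTrailingDegree with hk
    have hki0 : k ≤ i0 := natTrailingDegree_le_of_ne_zero hi0n.ne
    have hdvd : (X : ℝ[X]) ^ k ∣ A :=
      X_pow_dvd_iff.mpr fun d hd => coeff_eq_zero_of_lt_natTrailingDegree hd
    obtain ⟨Q, hQ⟩ := hdvd
    have hQne : Q ≠ 0 := by rintro rfl; simp at hQ; exact hA hQ
    have hQlc : Q.leadingCoeff = A.leadingCoeff := by
      rw [hQ, leadingCoeff_mul, leadingCoeff_X_pow, one_mul]
    have hndeg : A.natDegree = k + Q.natDegree := by
      rw [hQ, natDegree_mul (pow_ne_zero _ X_ne_zero) hQne, natDegree_X_pow]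
    have hQdeg : 0 < Q.natDegree := by omega
    have hQ0 : Q.coeff 0 = A.coeff k := by
      have := coeff_X_pow_mul Q k 0
      rw [← hQ] at this
      simpa using this.symm
    have hQ0neg : Q.coeff 0 < 0 := by
      rw [hQ0]
      have hne : A.coeff k ≠ 0 := by
        rw [hk, ← trailingCoeff]
        exact trailingCoeff_nonzero_iff_nonzero.mpr hA
      exact lt_of_le_of_ne (hneg k (by omega)) hne
    have htt : Filter.Tendsto (fun x => eval x Q) Filter.atTop Filter.atTop :=
      Polynomial.tendsto_atTop_of_leadingCoeff_nonneg Q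
        (natDegree_pos_iff_degree_pos.mp hQdeg) (by rw [hQlc]; exact hlc.le)
    obtain ⟨M, hM1, hM2⟩ :=
      ((htt.eventually (Filter.eventually_gt_atTop 0)).and (Filter.eventually_gt_atTop 0)).exists
    have hQeval0 : eval 0 Q < 0 := by rw [← coeff_zero_eq_eval_zero]; exact hQ0neg
    have hIVT := intermediate_value_Icc hM2.le (Polynomial.continuous Q).continuousOn
    have h0mem : (0 : ℝ) ∈ Set.Icc (eval 0 Q) (eval M Q) := ⟨hQeval0.le, hM1.le⟩
    obtain ⟨r, hrIcc, hr⟩ := hIVT h0mem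
    have hrpos : 0 < r := by
      rcases lt_or_eq_of_le hrIcc.1 with h | h
      · exact h
      · exfalso
        have hr' : eval r Q = 0 := hr
        rw [← h] at hr'
        linarith
    refine ⟨r, hrpos, ?_⟩
    rw [hQ]
    simp [hr]
  -- conclude
  obtain ⟨r, hrpos, hroot⟩ := hex
  set s := A.roots.filter (fun x => 0 < x) with hs
  have hrs : r ∈ s := Multiset.mem_filter.mpr ⟨mem_roots'.mpr ⟨hA, hroot⟩, hrpos⟩
  have hall : ∀ b ∈ s, b = r := by
    intro b hb
    obtain ⟨hb1, hb2⟩ := Multiset.mem_filter.mp hb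
    exact huniq b r hb2 hrpos (mem_roots'.mp hb1).2 hroot
  have hrep : s = Multiset.replicate (Multiset.card s) r := Multiset.eq_replicate_card.mpr hall
  have hcount1 : Multiset.count r s = Multiset.card s := by
    conv_lhs => rw [hrep]
    exact Multiset.count_replicate_self r _
  have hcount2 : Multiset.count r s = Multiset.count r A.roots :=
    Multiset.count_filter_of_pos hrpos
  have hmult : Multiset.count r A.roots = 1 := by
    rw [count_roots]
    have hge : 1 ≤ rootMultiplicity r A := (rootMultiplicity_pos hA).mpr hroot
    have hle : rootMultiplicity r A ≤ 1 := by
      by_contra hc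
      push_neg at hc
      have hd := derivative_rootMultiplicity_of_root (p := A) (t := r) hroot
      have hA'pos := hA' r hrpos hroot
      have hdne : derivative A ≠ 0 := by
        intro h; rw [h] at hA'pos; simp at hA'pos
      have : 0 < rootMultiplicity r (derivative A) := by omega
      have := (rootMultiplicity_pos hdne).mp this
      rw [IsRoot] at this
      linarith [hA'pos, this]
    omega
  omega

lemma var_zero_signs (A : ℝ[X]) (hA : A ≠ 0)
    (h : pairsNeg (((List.range (A.natDegree + 1)).map A.coeff).filter
      (fun x => decide (x ≠ 0))) = 0) :
    ∀ i, A.coeff i ≠ 0 → 0 < A.coeff i * A.leadingCoeff := by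
  intro i hi
  have hnz : ∀ a ∈ ((List.range (A.natDegree + 1)).map A.coeff).filter
      (fun x => decide (x ≠ 0)), a ≠ 0 := by
    intro a ha
    simpa using (List.mem_filter.mp ha).2
  have hpw := pairsNeg_pairwise hnz h
  have hin : i ≤ A.natDegree := by
    by_contra hc
    exact hi (coeff_eq_zero_of_natDegree_lt (by omega))
  have hlcne : A.coeff A.natDegree ≠ 0 := by
    rw [← leadingCoeff]; exact leadingCoeff_ne_zero.mpr hA
  have := hpw _ (mem_coeffList_filter hin hi) _ (mem_coeffList_filter le_rfl hlcne)
  rwa [← leadingCoeff] at this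

theorem descartes_zero_one (A : Polynomial ℝ) (hA : A ≠ 0) :
    (var A = 0 → (A.roots.filter fun x => 0 < x).card = 0) ∧
    (var A = 1 → (A.roots.filter fun x => 0 < x).card = 1) := by
  classical
  have hvar : ∀ k, var A = k ↔ pairsNeg (((List.range (A.natDegree + 1)).map A.coeff).filter
      (fun x => decide (x ≠ 0))) = k := by
    intro k
    rw [var, signVar_eq]
  have hlcne : A.leadingCoeff ≠ 0 := leadingCoeff_ne_zero.mpr hA
  constructor
  · intro h0
    have hsigns := var_zero_signs A hA ((hvar 0).mp h0)
    rw [Multiset.card_eq_zero, Multiset.filter_eq_nil]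
    intro r hr hrpos
    have hroot : A.eval r = 0 := (mem_roots'.mp hr).2
    rcases hlcne.lt_or_gt with hlc | hlc
    · -- leading coeff negative: -A has nonneg coeffs
      have hcoeffs : ∀ i, 0 ≤ (-A).coeff i := by
        intro i
        rw [coeff_neg]
        by_cases hne : A.coeff i = 0
        · simp [hne]
        · have := hsigns i hne
          nlinarith
      have := evalPos (-A) (neg_ne_zero.mpr hA) hcoeffs hrpos
      rw [eval_neg, hroot] at this
      linarith
    · have hcoeffs : ∀ i, 0 ≤ A.coeff i := by
        intro i
        by_cases hne : A.coeff i = 0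
        · simp [hne]
        · have := hsigns i hne
          nlinarith
      have := evalPos A hA hcoeffs hrpos
      linarith
  · intro h1
    obtain ⟨m, hm0, hmn, hneg, hpos, i0, hi0, hi0n⟩ := var_one_struct A hA ((hvar 1).mp h1)
    rcases hlcne.lt_or_gt with hlc | hlc
    · -- leading coeff negative: work with -A
      have hres := key (-A) (neg_ne_zero.mpr hA) (by rw [leadingCoeff_neg]; linarith)
        m hm0 (by rwa [natDegree_neg])
        (fun i hi => by rw [coeff_neg]; nlinarith [hneg i hi])
        (fun i hi => by rw [coeff_neg]; nlinarith [hpos i hi])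
        i0 hi0 (by rw [coeff_neg]; nlinarith [hi0n])
      rwa [roots_neg] at hres
    · exact key A hA hlc m hm0 hmn
        (fun i hi => by nlinarith [hneg i hi])
        (fun i hi => by nlinarith [hpos i hi])
        i0 hi0 (by nlinarith [hi0n])
end

section
/- If all roots of a real polynomial A of degree d are real (A is hyperbolic), then the number of positive roots of A counted with multiplicity equals var(A) exactly. -/
open Polynomial

open Classical in
/-- sign variations with a "previous sign" seed `x` (use `x = 0` for no seed). -/
noncomputable def svA : ℝ → List ℝ → ℕ
  | _, [] => 0
  | x, y :: t => if y = 0 then svA x t else (if x * y < 0 then 1 else 0) + svA y t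

noncomputable def sv (l : List ℝ) : ℕ := svA 0 l

@[simp] lemma svA_nil (x : ℝ) : svA x [] = 0 := rfl

lemma svA_cons (x y : ℝ) (t : List ℝ) :
    svA x (y :: t) = if y = 0 then svA x t else (if x * y < 0 then 1 else 0) + svA y t := rfl

lemma svA_cons_zero (x : ℝ) (t : List ℝ) : svA x (0 :: t) = svA x t := by
  simp [svA_cons]

lemma svA_cons_ne (x y : ℝ) (t : List ℝ) (hy : y ≠ 0) :
    svA x (y :: t) = (if x * y < 0 then 1 else 0) + svA y t := by
  simp [svA_cons, hy]

lemma sv_nil : sv [] = 0 := rfl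

lemma sv_cons_zero (t : List ℝ) : sv (0 :: t) = sv t := svA_cons_zero 0 t

lemma sv_cons_ne (y : ℝ) (t : List ℝ) (hy : y ≠ 0) : sv (y :: t) = svA y t := by
  simp [sv, svA_cons_ne _ _ _ hy, not_lt.2 (le_of_eq (zero_mul y).symm)]

section bridge

lemma countP_zip_eq_svA (t : List ℝ) : ∀ x : ℝ, x ≠ 0 → (∀ z ∈ t, z ≠ 0) →
    (letI : DecidablePred fun p : ℝ × ℝ => p.1 * p.2 < 0 := fun _ => Classical.dec _
    ((x :: t).zip t).countP fun p => p.1 * p.2 < 0) = svA x t := by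
  induction t with
  | nil => intro x hx h; simp
  | cons y t ih =>
    intro x hx h
    have hy : y ≠ 0 := h y (List.mem_cons_self)
    have := ih y hy (fun z hz => h z (List.mem_cons_of_mem _ hz))
    simp only [List.zip_cons_cons, List.countP_cons, svA_cons_ne _ _ _ hy] at *
    rw [this]
    by_cases hxy : x * y < 0 <;> simp [hxy, Nat.add_comm]

lemma svA_filter (l : List ℝ) : ∀ x : ℝ,
    (letI := Classical.decEq ℝ; svA x (l.filter (· ≠ 0))) = svA x l := by
  have hfe : (fun x : ℝ => !decide (x = 0)) = (fun x => decide (x ≠ 0)) := by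
    funext x; simp [ne_eq]
  induction l with
  | nil => intro x; rfl
  | cons y t ih =>
    intro x
    by_cases hy : y = 0
    · subst hy; simpa [List.filter_cons, svA_cons_zero, ne_eq, hfe] using ih x
    · have ihy := ih y
      simp only [ne_eq] at ihy
      simp only [List.filter_cons, ne_eq, hy, not_false_eq_true, if_pos,
        decide_not, svA_cons_ne _ _ _ hy]
      rw [show (fun x : ℝ => !decide (x = 0)) = (fun x => decide (¬ x = 0)) from by
        funext x; simp]
      rw [if_pos (by simp), svA_cons_ne _ _ _ hy, ihy]

lemma signVar_eq_sv (l : List ℝ) : signVar l = sv l := by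
  classical
  unfold signVar
  rw [sv, ← svA_filter l 0]
  simp only []
  generalize hg : (letI := Classical.decEq ℝ; l.filter (· ≠ 0)) = g
  have hmem : ∀ z ∈ g, z ≠ 0 := by
    intro z hz; rw [← hg] at hz; simpa using (List.mem_filter.1 hz).2
  cases g with
  | nil => simp
  | cons x t =>
    have hx : x ≠ 0 := hmem x (List.mem_cons_self)
    have ht : ∀ z ∈ t, z ≠ 0 := fun z hz => hmem z (List.mem_cons_of_mem _ hz)
    rw [svA_cons_ne _ _ _ hx]
    simpa [not_lt.2 (le_of_eq (zero_mul x).symm)] using countP_zip_eq_svA t x hx ht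

section listlemmas

/-- last nonzero entry, with default seed `s`. -/
noncomputable def lastNZD (s : ℝ) (l : List ℝ) : ℝ := l.foldl (fun a x => if x = 0 then a else x) s

noncomputable def lastNZ (l : List ℝ) : ℝ := lastNZD 0 l

/-- partial sums starting from `s`. -/
noncomputable def psFrom (s : ℝ) : List ℝ → List ℝ
  | [] => []
  | x :: t => (s + x) :: psFrom (s + x) t

noncomputable def ps (l : List ℝ) : List ℝ := psFrom 0 l

@[simp] lemma lastNZD_nil (s : ℝ) : lastNZD s [] = s := rfl

lemma lastNZD_cons (s x : ℝ) (t : List ℝ) :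
    lastNZD s (x :: t) = lastNZD (if x = 0 then s else x) t := rfl

lemma lastNZD_cons_zero (s : ℝ) (t : List ℝ) : lastNZD s (0 :: t) = lastNZD s t := by
  rw [lastNZD_cons, if_pos rfl]

lemma lastNZD_cons_ne (s x : ℝ) (t : List ℝ) (hx : x ≠ 0) :
    lastNZD s (x :: t) = lastNZD x t := by
  rw [lastNZD_cons, if_neg hx]

lemma lastNZD_append (s y : ℝ) (l : List ℝ) :
    lastNZD s (l ++ [y]) = if y = 0 then lastNZD s l else y := by
  simp [lastNZD, List.foldl_append]

lemma lastNZD_eq_or (l : List ℝ) : ∀ s, lastNZD s l = s ∨ (lastNZD s l ∈ l ∧ lastNZD s l ≠ 0) := by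
  induction l with
  | nil => intro s; left; rfl
  | cons x t ih =>
    intro s
    rw [lastNZD_cons]
    by_cases hx : x = 0
    · rw [if_pos hx]
      rcases ih s with h | h
      · left; exact h
      · right; exact ⟨List.mem_cons_of_mem _ h.1, h.2⟩
    · rw [if_neg hx]
      rcases ih x with h | h
      · right; rw [h]; exact ⟨List.mem_cons_self, hx⟩
      · right; exact ⟨List.mem_cons_of_mem _ h.1, h.2⟩

lemma lastNZD_ne_zero (l : List ℝ) : ∀ s x, x ∈ l → x ≠ 0 → lastNZD s l ≠ 0 := by
  induction l with
  | nil => intro s x h; exact absurd h List.not_mem_nil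
  | cons z t ih =>
    intro s x hx hx0
    rw [lastNZD_cons]
    rcases List.mem_cons.1 hx with rfl | hmem
    · rw [if_neg hx0]
      rcases lastNZD_eq_or t x with h | h
      · rw [h]; exact hx0
      · exact h.2
    · exact ih _ x hmem hx0

lemma all_zero_of_lastNZ (l : List ℝ) (h : lastNZ l = 0) : ∀ x ∈ l, x = 0 := by
  intro x hx
  by_contra hx0
  exact lastNZD_ne_zero l 0 x hx hx0 h

@[simp] lemma psFrom_nil (s : ℝ) : psFrom s [] = [] := rfl

lemma psFrom_cons (s x : ℝ) (t : List ℝ) : psFrom s (x :: t) = (s + x) :: psFrom (s + x) t := rfl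

lemma psFrom_append_singleton (l : List ℝ) : ∀ s y,
    psFrom s (l ++ [y]) = psFrom s l ++ [s + l.sum + y] := by
  induction l with
  | nil => intro s y; simp [psFrom]
  | cons x t ih =>
    intro s y
    simp only [List.cons_append, psFrom_cons, ih, List.sum_cons]
    congr 2
    ring

lemma ps_append (l : List ℝ) (y : ℝ) : ps (l ++ [y]) = ps l ++ [l.sum + y] := by
  simp [ps, psFrom_append_singleton]

lemma psFrom_all_zero (l : List ℝ) (h : ∀ x ∈ l, x = 0) : ∀ s y, y ∈ psFrom s l → y = s := by
  induction l with
  | nil => intro s y hy; exact absurd hy List.not_mem_nil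
  | cons x t ih =>
    intro s y hy
    have hx : x = 0 := h x (List.mem_cons_self)
    rw [psFrom_cons, hx, add_zero] at hy
    rcases List.mem_cons.1 hy with rfl | hmem
    · rfl
    · exact ih (fun z hz => h z (List.mem_cons_of_mem _ hz)) s y hmem

lemma lastNZ_ps_of_sum_ne (l : List ℝ) (h : l.sum ≠ 0) : lastNZ (ps l) = l.sum := by
  induction l using List.reverseRecOn with
  | nil => simp at h
  | append_singleton t y _ =>
    rw [ps_append, lastNZ, lastNZD_append, List.sum_append, List.sum_cons, List.sum_nil, add_zero]
    rw [List.sum_append, List.sum_cons, List.sum_nil, add_zero] at h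
    rw [if_neg h]

lemma lastNZ_ps_of_all_zero (l : List ℝ) (h : ∀ x ∈ l, x = 0) : lastNZ (ps l) = 0 := by
  have : ∀ y ∈ ps l, y = 0 := by
    intro y hy
    simpa using psFrom_all_zero l h 0 y hy
  by_contra hne
  rcases lastNZD_eq_or (ps l) 0 with h' | h'
  · exact hne h'
  · exact hne (this _ h'.1)

lemma svA_append (l : List ℝ) : ∀ x y, svA x (l ++ [y]) =
    svA x l + (if lastNZD x l * y < 0 then 1 else 0) := by
  induction l with
  | nil =>
    intro x y
    by_cases hy : y = 0
    · subst hy; simp [svA_cons_zero]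
    · simp [svA_cons_ne _ _ _ hy]
      exact if_congr Iff.rfl rfl rfl
  | cons z t ih =>
    intro x y
    by_cases hz : z = 0
    · subst hz
      simp only [List.cons_append, svA_cons_zero, ih, lastNZD_cons_zero]
    · simp only [List.cons_append, svA_cons_ne _ _ _ hz, ih z y, lastNZD_cons, if_neg hz,
        Nat.add_assoc, lastNZD_cons_ne _ _ _ hz]

lemma sv_append (l : List ℝ) (y : ℝ) :
    sv (l ++ [y]) = sv l + (if lastNZ l * y < 0 then 1 else 0) :=
  svA_append l 0 y

end listlemmas

section claimM

private lemma key_ineq (α π s y : ℝ) (hπ : s ≠ 0 → π = s) (hz : α = 0 → s = 0 ∧ π = 0) :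
    ((if π * (s + y) < 0 then 1 else 0) : ℕ) +
      (if (if y = 0 then α else y) ≠ 0 ∧ (if y = 0 then α else y) * (s + y) ≤ 0 then 1 else 0)
    ≤ (if α ≠ 0 ∧ α * s ≤ 0 then 1 else 0) + (if α * y < 0 then 1 else 0) := by
  by_cases hy : y = 0
  · subst hy
    have h0 : ¬ (π * s < 0) := by
      rcases eq_or_ne s 0 with h | h
      · subst h; simp
      · rw [hπ h]; nlinarith [sq_nonneg s]
    simp [h0]
  · rw [if_neg hy]
    by_cases hα : α = 0
    · obtain ⟨hs, hπ0⟩ := hz hα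
      have h1 : ¬ (π * (s + y) < 0) := by rw [hπ0, zero_mul]; exact lt_irrefl 0
      have h2 : ¬ (y ≠ 0 ∧ y * (s + y) ≤ 0) := by
        rintro ⟨-, hle⟩
        rw [hs, zero_add] at hle
        nlinarith [mul_self_pos.mpr hy]
      simp [h1, h2]
    · have hαy' : α * y ≠ 0 := mul_ne_zero hα hy
      by_cases hαy : α * y < 0
      · rw [if_pos hαy]
        by_cases hτ : α ≠ 0 ∧ α * s ≤ 0
        · rw [if_pos hτ]
          split_ifs <;> omega
        · rw [if_neg hτ]
          push_neg at hτ
          have hαs : 0 < α * s := hτ hα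
          have hs : s ≠ 0 := by rintro rfl; rw [mul_zero] at hαs; exact lt_irrefl 0 hαs
          rw [hπ hs]
          have hboth : ¬ (s * (s + y) < 0 ∧ y * (s + y) ≤ 0) := by
            rintro ⟨u1, u2⟩; nlinarith [sq_nonneg (s + y)]
          split_ifs with h1 h2 <;> try omega
          exact absurd ⟨h1, h2.2⟩ hboth
      · rw [if_neg hαy]
        have hαy2 : 0 < α * y := (hαy'.symm).lt_of_le (not_lt.1 hαy)
        by_cases hτ : α ≠ 0 ∧ α * s ≤ 0
        · rw [if_pos hτ]
          rcases eq_or_ne s 0 with hs | hs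
          · have h2 : ¬ (y ≠ 0 ∧ y * (s + y) ≤ 0) := by
              rintro ⟨-, hle⟩
              rw [hs, zero_add] at hle
              nlinarith [mul_self_pos.mpr hy]
            rw [if_neg h2]
            split_ifs <;> omega
          · rw [hπ hs]
            have hboth : ¬ (s * (s + y) < 0 ∧ y * (s + y) ≤ 0) := by
              rintro ⟨u1, u2⟩; nlinarith [sq_nonneg (s + y)]
            split_ifs with h1 h2 <;> try omega
            exact absurd ⟨h1, h2.2⟩ hboth
        · rw [if_neg hτ]
          push_neg at hτ
          have hαs : 0 < α * s := hτ hα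
          have hs : s ≠ 0 := by rintro rfl; rw [mul_zero] at hαs; exact lt_irrefl 0 hαs
          rw [hπ hs]
          have hsy : 0 < s * y := by nlinarith [mul_pos hαs hαy2, sq_nonneg α, mul_self_pos.mpr hα]
          have h1 : ¬ (s * (s + y) < 0) := by nlinarith [sq_nonneg s]
          have h2 : ¬ (y ≠ 0 ∧ y * (s + y) ≤ 0) := by
            rintro ⟨-, hle⟩
            nlinarith [mul_self_pos.mpr hy]
          simp [h1, h2]

lemma claim_M (l : List ℝ) :
    sv (ps l) + (if lastNZ l ≠ 0 ∧ lastNZ l * l.sum ≤ 0 then 1 else 0) ≤ sv l := by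
  induction l using List.reverseRecOn with
  | nil => simp [ps, sv_nil, lastNZ]
  | append_singleton l y ih =>
    have e1 := sv_append l y
    have e2 := sv_append (ps l) (l.sum + y)
    have e3 := ps_append l y
    have e4 : lastNZ (l ++ [y]) = if y = 0 then lastNZ l else y := lastNZD_append 0 y l
    rw [e3, e2, e1, e4, List.sum_append, List.sum_cons, List.sum_nil, add_zero]
    have hπ : l.sum ≠ 0 → lastNZ (ps l) = l.sum := lastNZ_ps_of_sum_ne l
    have hz : lastNZ l = 0 → l.sum = 0 ∧ lastNZ (ps l) = 0 := by
      intro h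
      have hall := all_zero_of_lastNZ l h
      exact ⟨List.sum_eq_zero hall, lastNZ_ps_of_all_zero l hall⟩
    have key := key_ineq (lastNZ l) (lastNZ (ps l)) l.sum y hπ hz
    have ihl := ih
    omega

end claimM

section congrsv

def srel (x y : ℝ) : Prop := (0 < x ↔ 0 < y) ∧ (x < 0 ↔ y < 0)

lemma srel_refl (x : ℝ) : srel x x := ⟨Iff.rfl, Iff.rfl⟩

lemma srel_zero {x y : ℝ} (h : srel x y) : x = 0 ↔ y = 0 := by
  constructor
  · intro hx; subst hx
    rcases lt_trichotomy y 0 with h' | h' | h'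
    · exact absurd (h.2.mpr h') (lt_irrefl 0)
    · exact h'
    · exact absurd (h.1.mpr h') (lt_irrefl 0)
  · intro hy; subst hy
    rcases lt_trichotomy x 0 with h' | h' | h'
    · exact absurd (h.2.mp h') (lt_irrefl 0)
    · exact h'
    · exact absurd (h.1.mp h') (lt_irrefl 0)

lemma srel_mul {x₁ x₂ y₁ y₂ : ℝ} (hx : srel x₁ x₂) (hy : srel y₁ y₂) :
    x₁ * y₁ < 0 ↔ x₂ * y₂ < 0 := by
  rw [mul_neg_iff, mul_neg_iff, hx.1, hx.2, hy.1, hy.2]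

lemma svA_congr {l₁ l₂ : List ℝ} (h : List.Forall₂ srel l₁ l₂) :
    ∀ x₁ x₂ : ℝ, srel x₁ x₂ → svA x₁ l₁ = svA x₂ l₂ := by
  induction h with
  | nil => intro _ _ _; rfl
  | cons hy htail ih =>
    intro x₁ x₂ hx
    rename_i y₁ y₂ t₁ t₂
    by_cases hy0 : y₁ = 0
    · have hy0' : y₂ = 0 := (srel_zero hy).mp hy0
      rw [hy0, hy0', svA_cons_zero, svA_cons_zero]
      exact ih x₁ x₂ hx
    · have hy0' : y₂ ≠ 0 := fun h' => hy0 ((srel_zero hy).mpr h')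
      rw [svA_cons_ne _ _ _ hy0, svA_cons_ne _ _ _ hy0', ih y₁ y₂ hy]
      congr 1
      simp only [srel_mul hx hy]

lemma sv_congr {l₁ l₂ : List ℝ} (h : List.Forall₂ srel l₁ l₂) : sv l₁ = sv l₂ :=
  svA_congr h 0 0 (srel_refl 0)

lemma svA_map_neg (l : List ℝ) : ∀ x : ℝ, svA (-x) (l.map (fun z => -z)) = svA x l := by
  induction l with
  | nil => intro x; rfl
  | cons y t ih =>
    intro x
    by_cases hy : y = 0
    · subst hy; simp only [List.map_cons, neg_zero, svA_cons_zero]; exact ih x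
    · have hy' : -y ≠ 0 := neg_ne_zero.mpr hy
      rw [List.map_cons, svA_cons_ne _ _ _ hy', svA_cons_ne _ _ _ hy, ih y]
      congr 1
      simp only [neg_mul_neg]

lemma sv_map_neg (l : List ℝ) : sv (l.map (fun z => -z)) = sv l := by
  have := svA_map_neg l 0
  rwa [neg_zero] at this

lemma map_neg_neg (l : List ℝ) : (l.map (fun z => -z)).map (fun z => -z) = l := by
  simp [List.map_map, Function.comp_def]

lemma srel_mul_pos {c : ℝ} (hc : 0 < c) (x : ℝ) : srel x (c * x) := by
  constructor
  · constructor
    · intro h; exact mul_pos hc h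
    · intro h; by_contra h'; push_neg at h'; nlinarith
  · constructor
    · intro h; exact mul_neg_of_pos_of_neg hc h
    · intro h; by_contra h'; push_neg at h'; nlinarith

lemma forall₂_srel_mul {c : ℝ} (hc : 0 < c) (l : List ℝ) :
    List.Forall₂ srel l (l.map (fun z => c * z)) := by
  induction l with
  | nil => simp
  | cons x t ih => exact List.Forall₂.cons (srel_mul_pos hc x) ih

lemma sv_map_mul_left {c : ℝ} (hc : c ≠ 0) (l : List ℝ) :
    sv (l.map (fun z => c * z)) = sv l := by
  rcases hc.lt_or_gt with h | h
  · have hpos : 0 < -c := by linarith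
    have : l.map (fun z => c * z) = (l.map (fun z => -c * z)).map (fun z => -z) := by
      simp [List.map_map, Function.comp_def]
    rw [this, sv_map_neg, ← sv_congr (forall₂_srel_mul hpos l)]
  · exact (sv_congr (forall₂_srel_mul h l)).symm

lemma svA_neg_le (l : List ℝ) : ∀ x : ℝ, svA x l ≤ svA (-x) l + 1 := by
  induction l with
  | nil => intro x; simp
  | cons y t ih =>
    intro x
    by_cases hy : y = 0
    · subst hy; rw [svA_cons_zero, svA_cons_zero]; exact ih x
    · rw [svA_cons_ne _ _ _ hy, svA_cons_ne _ _ _ hy]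
      have : (if x * y < 0 then 1 else 0) ≤ (if -x * y < 0 then 1 else 0) + 1 := by
        split_ifs <;> omega
      omega

end congrsv

section altsec

noncomputable def alt : List ℝ → List ℝ
  | [] => []
  | x :: t => x :: (alt t).map (fun z => -z)

@[simp] lemma alt_nil : alt [] = [] := rfl

lemma alt_cons (x : ℝ) (t : List ℝ) : alt (x :: t) = x :: (alt t).map (fun z => -z) := rfl

lemma alt_cons_cons (x y : ℝ) (t : List ℝ) : alt (x :: y :: t) = x :: -y :: alt t := by
  rw [alt_cons, alt_cons, List.map_cons, map_neg_neg]

lemma alt_length (l : List ℝ) : (alt l).length = l.length := by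
  induction l with
  | nil => rfl
  | cons x t ih => simp [alt_cons, ih]

lemma sv_singleton (x : ℝ) : sv [x] = 0 := by
  by_cases hx : x = 0
  · subst hx; rw [sv_cons_zero]; rfl
  · rw [sv_cons_ne _ _ hx]; rfl

lemma sv_add_sv_alt : ∀ n : ℕ, ∀ l : List ℝ, l.length ≤ n → sv l + sv (alt l) ≤ l.length - 1 := by
  intro n
  induction n with
  | zero =>
    intro l hl
    rw [List.length_eq_zero_iff.mp (Nat.le_zero.mp hl)]
    simp [sv_nil]
  | succ n ih =>
    intro l hl
    match l with
    | [] => simp [sv_nil]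
    | [x] => simp [sv_singleton, alt_cons]
    | x :: y :: t =>
      simp only [List.length_cons] at hl ⊢
      by_cases hx : x = 0
      · subst hx
        rw [sv_cons_zero, alt_cons, sv_cons_zero, sv_map_neg]
        have := ih (y :: t) (by simpa using Nat.le_of_succ_le_succ hl)
        have ed : sv (alt (y :: t)) = sv (y :: (alt t).map (fun z => -z)) := by rw [alt_cons]
        simp only [List.length_cons] at this
        omega
      · by_cases hy : y = 0
        · subst hy
          have e1 : sv (x :: (0:ℝ) :: t) = svA x t := by
            rw [sv_cons_ne _ _ hx, svA_cons_zero]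
          have e2 : alt (x :: (0:ℝ) :: t) = x :: (0:ℝ) :: alt t := by
            rw [alt_cons_cons, neg_zero]
          have e3 : sv (x :: (0:ℝ) :: alt t) = svA x (alt t) := by
            rw [sv_cons_ne _ _ hx, svA_cons_zero]
          have ihx := ih (x :: t) (by simpa using Nat.le_of_succ_le_succ hl)
          rw [alt_cons, sv_cons_ne _ _ hx, sv_cons_ne _ _ hx] at ihx
          -- ihx : svA x t + svA x ((alt t).map neg) ≤ (x :: t).length - 1
          have key : svA x (alt t) ≤ svA x ((alt t).map (fun z => -z)) + 1 := by
            have e4 : svA (-x) ((alt t).map (fun z => -z)) = svA x (alt t) := svA_map_neg (alt t) x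
            have := svA_neg_le ((alt t).map (fun z => -z)) (-x)
            rw [neg_neg] at this
            omega
          rw [e1, e2, e3]
          simp only [List.length_cons] at ihx
          omega
        · have e1 : sv (x :: y :: t) = (if x * y < 0 then 1 else 0) + sv (y :: t) := by
            rw [sv_cons_ne _ _ hx, svA_cons_ne _ _ _ hy, sv_cons_ne _ _ hy]
          have e2 : sv (alt (x :: y :: t)) =
              (if x * -y < 0 then 1 else 0) + sv (alt (y :: t)) := by
            rw [alt_cons_cons, sv_cons_ne _ _ hx,
              svA_cons_ne _ _ _ (neg_ne_zero.mpr hy), alt_cons, sv_cons_ne _ _ hy]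
            congr 1
            have := svA_map_neg ((alt t).map (fun z => -z)) y
            rwa [map_neg_neg] at this
          have hind : (if x * y < 0 then 1 else 0) + (if x * -y < 0 then 1 else 0) ≤ 1 := by
            split_ifs with h1 h2 <;> try omega
            exfalso; nlinarith
          have := ih (y :: t) (by simpa using Nat.le_of_succ_le_succ hl)
          simp only [List.length_cons] at this
          rw [e1, e2]
          omega

end altsec

section moreutil

lemma alt_append_singleton (l : List ℝ) : ∀ y : ℝ,
    alt (l ++ [y]) = alt l ++ [(-1)^l.length * y] := by
  induction l with
  | nil => intro y; simp [alt_cons]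
  | cons x t ih =>
    intro y
    rw [List.cons_append, alt_cons, ih y, List.map_append, alt_cons, List.length_cons]
    simp only [List.map_cons, List.map_nil, List.cons_append]
    congr 2
    rw [pow_succ]
    ring

lemma alt_map_range (F : ℕ → ℝ) : ∀ m : ℕ,
    alt ((List.range m).map F) = (List.range m).map (fun i => (-1)^i * F i) := by
  intro m
  induction m with
  | zero => simp
  | succ m ih =>
    rw [List.range_succ, List.map_append, List.map_append, List.map_singleton,
      List.map_singleton, alt_append_singleton, ih]
    simp

lemma sv_append_zero (l : List ℝ) : sv (l ++ [0]) = sv l := by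
  rw [sv_append]
  simp

lemma ps_map_range (f F : ℕ → ℝ) (hF : ∀ i, ((List.range (i+1)).map f).sum = F i) :
    ∀ m : ℕ, ps ((List.range m).map f) = (List.range m).map F := by
  intro m
  induction m with
  | zero => simp [ps]
  | succ m ih =>
    rw [List.range_succ, List.map_append, List.map_append, List.map_singleton,
      List.map_singleton, ps_append, ih]
    congr 1
    have := hF m
    rw [List.range_succ, List.map_append, List.sum_append] at this
    simpa using this

lemma forall₂_map_self {α : Type*} (l : List α) (F G : α → ℝ) (h : ∀ a, srel (F a) (G a)) :
    List.Forall₂ srel (l.map F) (l.map G) := by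
  induction l with
  | nil => simp
  | cons x t ih => exact List.Forall₂.cons (h x) ih

end moreutil

section polysec

noncomputable def clist (p : ℝ[X]) : List ℝ := (List.range (p.natDegree + 1)).map p.coeff

lemma var_eq_sv (p : ℝ[X]) : var p = sv (clist p) := signVar_eq_sv _

lemma var_C_mul {c : ℝ} (hc : c ≠ 0) (p : ℝ[X]) : var (C c * p) = var p := by
  rw [var_eq_sv, var_eq_sv]
  have h1 : clist (C c * p) = (clist p).map (fun z => c * z) := by
    rw [clist, clist, natDegree_C_mul hc, List.map_map]
    apply List.map_congr_left
    intro i _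
    simp [coeff_C_mul]
  rw [h1, sv_map_mul_left hc]

lemma var_X_mul (p : ℝ[X]) (hp : p ≠ 0) : var (X * p) = var p := by
  rw [var_eq_sv, var_eq_sv]
  have hd : (X * p).natDegree = p.natDegree + 1 := by
    rw [natDegree_mul X_ne_zero hp, natDegree_X, add_comm]
  have h1 : clist (X * p) = 0 :: clist p := by
    rw [clist, clist, hd, List.range_succ_eq_map, List.map_cons, List.map_map]
    congr 1
    · simpa using mul_coeff_zero X p
    · apply List.map_congr_left
      intro i _
      simp [Function.comp, coeff_X_mul]
  rw [h1, sv_cons_zero]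

lemma var_X_pow_mul (p : ℝ[X]) (hp : p ≠ 0) (k : ℕ) : var (X^k * p) = var p := by
  induction k with
  | zero => simp
  | succ k ih =>
    have h : X^(k+1) * p = X * (X^k * p) := by ring
    rw [h, var_X_mul _ (mul_ne_zero (pow_ne_zero _ X_ne_zero) hp), ih]

/-- Descartes multiplication step: multiplying by a factor with a positive root
strictly increases the sign variation count. -/
lemma var_X_sub_C_mul {a : ℝ} (ha : 0 < a) (B : ℝ[X]) (hB : B ≠ 0) :
    var B + 1 ≤ var ((X - C a) * B) := by
  set n := B.natDegree with hn
  set D := (X - C a) * B with hDdef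
  have hD0 : D ≠ 0 := mul_ne_zero (X_sub_C_ne_zero a) hB
  have hD : D.natDegree = n + 1 := by
    rw [hDdef, natDegree_mul (X_sub_C_ne_zero a) hB, natDegree_X_sub_C, add_comm]
  have hc0 : D.coeff 0 = -(a * B.coeff 0) := by
    have hx : (X - C a).coeff 0 = -a := by simp
    rw [hDdef, mul_coeff_zero, hx]
    ring
  have hci : ∀ i, D.coeff (i + 1) = B.coeff i - a * B.coeff (i + 1) := by
    intro i
    rw [hDdef, sub_mul, coeff_sub, coeff_X_mul, coeff_C_mul]
  -- the weighted coefficient list of D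
  set f : ℕ → ℝ := fun i => a^i * D.coeff i with hf
  set g : List ℝ := (List.range (n + 2)).map f with hg
  have key : ∀ i, ((List.range (i+1)).map f).sum = -(a^(i+1) * B.coeff i) := by
    intro i
    induction i with
    | zero =>
      have e : ((List.range 1).map f).sum = f 0 := by
        rw [show List.range 1 = [0] from rfl, List.map_singleton, List.sum_singleton]
      rw [e]
      show a ^ 0 * D.coeff 0 = -(a ^ (0 + 1) * B.coeff 0)
      rw [hc0]
      ring
    | succ i ih =>
      rw [List.range_succ, List.map_append, List.sum_append, ih]
      simp only [List.map_singleton, List.sum_singleton, hf, hci i]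
      ring
  have hps : ps g = (List.range (n+2)).map (fun i => -(a^(i+1) * B.coeff i)) :=
    ps_map_range f _ key (n+2)
  -- sv g = var D
  have hsvg : sv g = sv (clist D) := by
    rw [hg, clist, hD]
    exact (sv_congr (forall₂_map_self _ _ _ (fun i => srel_mul_pos (pow_pos ha i) _))).symm
  -- sv (ps g) = var B
  have hcoefftop : B.coeff (n+1) = 0 := coeff_eq_zero_of_natDegree_lt (by omega)
  have hps2 : sv (ps g) = sv (clist B) := by
    rw [hps]
    have e1 : (List.range (n+2)).map (fun i => -(a^(i+1) * B.coeff i)) =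
        ((List.range (n+2)).map (fun i => a^(i+1) * B.coeff i)).map (fun z => -z) := by
      rw [List.map_map]; rfl
    rw [e1, sv_map_neg]
    have e2 : (List.range (n+2)).map (fun i => a^(i+1) * B.coeff i) =
        ((List.range (n+1)).map (fun i => a^(i+1) * B.coeff i)) ++ [0] := by
      rw [List.range_succ, List.map_append]
      simp [hcoefftop]
    rw [e2, sv_append_zero, clist]
    exact sv_congr (forall₂_map_self _ _ _ (fun i => srel_mul_pos (pow_pos ha (i+1)) _)) |>.symm
  -- last nonzero of g
  have hlead : D.coeff (n+1) ≠ 0 := by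
    rw [← hD]; exact leadingCoeff_ne_zero.mpr hD0
  have hfne : f (n + 1) ≠ 0 := by
    rw [hf]
    exact mul_ne_zero (pow_ne_zero _ (ne_of_gt ha)) hlead
  have hlast : lastNZ g ≠ 0 := by
    rw [hg, List.range_succ, List.map_append, List.map_singleton, lastNZ, lastNZD_append,
      if_neg hfne]
    exact hfne
  have hsum : g.sum = 0 := by
    rw [hg, key (n+1), hcoefftop, mul_zero, neg_zero]
  have hM := claim_M g
  rw [hsum, mul_zero] at hM
  rw [if_pos ⟨hlast, le_refl 0⟩] at hM
  rw [var_eq_sv, var_eq_sv, ← hsvg, ← hps2]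
  omega

end polysec

section mirror

lemma mirror_coeff (ms : Multiset ℝ) : ∀ i : ℕ,
    ((ms.map (fun r => X + C r)).prod).coeff i =
      (-1)^(Multiset.card ms + i) * ((ms.map (fun r => X - C r)).prod).coeff i := by
  induction ms using Multiset.induction_on with
  | empty =>
    intro i
    cases i with
    | zero => simp
    | succ j => simp [coeff_one]
  | cons r s ih =>
    intro i
    rw [Multiset.map_cons, Multiset.map_cons, Multiset.prod_cons, Multiset.prod_cons,
      Multiset.card_cons]
    have expandP : ((X + C r) * (s.map (fun r => X + C r)).prod).coeff i =
        (X * (s.map (fun r => X + C r)).prod).coeff i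
          + r * ((s.map (fun r => X + C r)).prod).coeff i := by
      rw [add_mul, coeff_add, coeff_C_mul]
    have expandM : ((X - C r) * (s.map (fun r => X - C r)).prod).coeff i =
        (X * (s.map (fun r => X - C r)).prod).coeff i
          - r * ((s.map (fun r => X - C r)).prod).coeff i := by
      rw [sub_mul, coeff_sub, coeff_C_mul]
    rw [expandP, expandM]
    cases i with
    | zero =>
      rw [mul_coeff_zero, mul_coeff_zero, coeff_X_zero, zero_mul, zero_mul, zero_add, ih 0]
      have e : Multiset.card s + 1 + 0 = (Multiset.card s + 0) + 1 := by omega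
      rw [e, pow_succ]
      ring
    | succ j =>
      rw [coeff_X_mul, coeff_X_mul, ih j, ih (j+1)]
      have e1 : Multiset.card s + (j + 1) = (Multiset.card s + j) + 1 := by omega
      have e2 : Multiset.card s + 1 + (j + 1) = (Multiset.card s + j) + 2 := by omega
      rw [e1, e2, pow_succ, pow_succ, pow_succ]
      ring

end mirror

section lowerbound

lemma prod_X_sub_C_ne_zero (ms : Multiset ℝ) : (ms.map (fun r => X - C r)).prod ≠ 0 := by
  apply Multiset.prod_ne_zero
  intro h
  rcases Multiset.mem_map.mp h with ⟨r, -, hr⟩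
  exact X_sub_C_ne_zero r hr

lemma var_prod_pos (ms : Multiset ℝ) : (∀ r ∈ ms, 0 < r) → ∀ R : ℝ[X], R ≠ 0 →
    var R + Multiset.card ms ≤ var (R * (ms.map (fun r => X - C r)).prod) := by
  induction ms using Multiset.induction_on with
  | empty => intro _ R hR; simp
  | cons r s ih =>
    intro hpos R hR
    have hr : 0 < r := hpos r (Multiset.mem_cons_self r s)
    have hs : ∀ x ∈ s, 0 < x := fun x hx => hpos x (Multiset.mem_cons_of_mem hx)
    have hRP : R * (s.map (fun r => X - C r)).prod ≠ 0 :=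
      mul_ne_zero hR (prod_X_sub_C_ne_zero s)
    have step := var_X_sub_C_mul hr (R * (s.map (fun r => X - C r)).prod) hRP
    have hre : R * ((r ::ₘ s).map (fun r => X - C r)).prod =
        (X - C r) * (R * (s.map (fun r => X - C r)).prod) := by
      rw [Multiset.map_cons, Multiset.prod_cons]
      ring
    rw [hre, Multiset.card_cons]
    have := ih hs R hR
    omega

end lowerbound

section splitsec

lemma hyperbolic_eq_prod (A : ℝ[X]) (hA : A ≠ 0)
    (hreal : ∀ z ∈ (A.map (algebraMap ℝ ℂ)).roots, z.im = 0) :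
    A = C A.leadingCoeff * (A.roots.map fun a => X - C a).prod := by
  classical
  have hf : Function.Injective (algebraMap ℝ ℂ) := (algebraMap ℝ ℂ).injective
  have hmapne : A.map (algebraMap ℝ ℂ) ≠ 0 := (Polynomial.map_ne_zero_iff hf).mpr hA
  have hroots : (A.map (algebraMap ℝ ℂ)).roots = Multiset.map Complex.ofReal A.roots := by
    apply Multiset.ext.mpr
    intro z
    by_cases him : z.im = 0
    · have hz : z = ((z.re : ℝ) : ℂ) := by
        apply Complex.ext <;> simp [him]
      rw [Polynomial.count_roots, hz]
      have e1 : Multiset.count ((z.re : ℝ) : ℂ) (Multiset.map Complex.ofReal A.roots)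
          = Multiset.count z.re A.roots :=
        Multiset.count_map_eq_count' Complex.ofReal A.roots Complex.ofReal_injective z.re
      rw [e1, Polynomial.count_roots]
      have e2 : ((z.re : ℝ) : ℂ) = algebraMap ℝ ℂ z.re := rfl
      rw [e2]
      exact (Polynomial.eq_rootMultiplicity_map hf z.re).symm
    · have h1 : Multiset.count z (A.map (algebraMap ℝ ℂ)).roots = 0 :=
        Multiset.count_eq_zero.mpr (fun hz => him (hreal z hz))
      have h2 : Multiset.count z (Multiset.map Complex.ofReal A.roots) = 0 := by
        apply Multiset.count_eq_zero.mpr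
        intro hz
        rcases Multiset.mem_map.mp hz with ⟨r, -, hr⟩
        exact him (by rw [← hr]; exact Complex.ofReal_im r)
      rw [h1, h2]
  have hcardC : Multiset.card (A.map (algebraMap ℝ ℂ)).roots = A.natDegree := by
    rw [Polynomial.natDegree_map (algebraMap ℝ ℂ) (p := A) |>.symm]
    exact (Polynomial.splits_iff_card_roots).mp
      (IsAlgClosed.splits _)
  have hcard : Multiset.card A.roots = A.natDegree := by
    rw [← hcardC, hroots, Multiset.card_map]
  exact Polynomial.Splits.eq_prod_roots ((Polynomial.splits_iff_card_roots).mpr hcard)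

end splitsec

theorem descartes_exact_hyperbolic (A : Polynomial ℝ) (hA : A ≠ 0)
    (hreal : ∀ z ∈ (A.map (algebraMap ℝ ℂ)).roots, z.im = 0) :
    (A.roots.filter fun x => 0 < x).card = var A := by
  have heq := hyperbolic_eq_prod A hA hreal
  set c := A.leadingCoeff with hcdef
  have hc : c ≠ 0 := leadingCoeff_ne_zero.mpr hA
  set m := A.roots with hm
  set mp := m.filter (fun x => 0 < x) with hmp
  set rest := m.filter (fun x => ¬ 0 < x) with hrest
  set m0 := rest.filter (fun x => x = 0) with hm0
  set mn := rest.filter (fun x => ¬ x = 0) with hmn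
  have hsplit1 : mp + rest = m := Multiset.filter_add_not _ m
  have hsplit2 : m0 + mn = rest := Multiset.filter_add_not _ rest
  have hmp_pos : ∀ r ∈ mp, 0 < r := fun r hr => (Multiset.mem_filter.mp hr).2
  have hmn_neg : ∀ r ∈ mn, r < 0 := by
    intro r hr
    have h1 := (Multiset.mem_filter.mp hr).2
    have h2 := (Multiset.mem_filter.mp (Multiset.mem_filter.mp hr).1).2
    rcases lt_trichotomy r 0 with h | h | h
    · exact h
    · exact absurd h h1
    · exact absurd h h2
  have hm0_zero : ∀ r ∈ m0, r = 0 := fun r hr => (Multiset.mem_filter.mp hr).2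
  set k := Multiset.card m0 with hk
  set msum := mn + mp with hmsum
  set g : ℝ → ℝ[X] := fun r => X - C r with hgdef
  set gp : ℝ → ℝ[X] := fun r => X + C r with hgpdef
  have P0 : (m0.map g).prod = X ^ k := by
    have hrep : m0.map g = Multiset.replicate k X := by
      apply Multiset.eq_replicate.mpr
      constructor
      · rw [Multiset.card_map]
      · rintro b hb
        rcases Multiset.mem_map.mp hb with ⟨r, hr, rfl⟩
        rw [hgdef]
        simp [hm0_zero r hr]
    rw [hrep, Multiset.prod_replicate]
  set T : ℝ[X] := C c * (msum.map g).prod with hTdef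
  have hprodne : ∀ s : Multiset ℝ, (s.map g).prod ≠ 0 := fun s => prod_X_sub_C_ne_zero s
  have hT0 : T ≠ 0 := mul_ne_zero (C_ne_zero.mpr hc) (hprodne msum)
  have hAT : A = X ^ k * T := by
    rw [heq, ← hsplit1, ← hsplit2]
    rw [Multiset.map_add, Multiset.map_add, Multiset.prod_add, Multiset.prod_add, P0, hTdef,
      hmsum, Multiset.map_add, Multiset.prod_add]
    ring
  have hvarA : var A = var T := by rw [hAT, var_X_pow_mul T hT0 k]
  -- lower bound : card mp ≤ var T
  have hTsplit : T = (C c * (mn.map g).prod) * (mp.map g).prod := by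
    rw [hTdef, hmsum, Multiset.map_add, Multiset.prod_add]
    ring
  have lower1 : var (C c * (mn.map g).prod) + Multiset.card mp ≤ var T := by
    rw [hTsplit]
    exact var_prod_pos mp hmp_pos _ (mul_ne_zero (C_ne_zero.mpr hc) (hprodne mn))
  -- the mirror polynomial
  set T' : ℝ[X] := C c * (msum.map gp).prod with hT'def
  set N := Multiset.card msum with hN
  have hdegT : T.natDegree = N := by
    rw [hTdef, natDegree_C_mul hc, hgdef, natDegree_multiset_prod_X_sub_C_eq_card]
  have hplusmap : msum.map gp = (msum.map (fun r => -r)).map g := by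
    rw [Multiset.map_map]
    apply Multiset.map_congr rfl
    intro r _
    simp [hgdef, hgpdef, sub_neg_eq_add]
  have hdegT' : T'.natDegree = N := by
    rw [hT'def, natDegree_C_mul hc, hplusmap, hgdef,
      natDegree_multiset_prod_X_sub_C_eq_card, Multiset.card_map]
  have hmirror : ∀ i, T'.coeff i = (-1)^(N + i) * T.coeff i := by
    intro i
    rw [hT'def, hTdef, coeff_C_mul, coeff_C_mul, hgpdef, hgdef, mirror_coeff msum i, ← hN]
    ring
  -- var T' = sv (alt (clist T))
  have hclistT' : clist T' = (alt (clist T)).map (fun z => (-1)^N * z) := by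
    rw [clist, clist, hdegT, hdegT', alt_map_range, List.map_map]
    apply List.map_congr_left
    intro i _
    simp only [Function.comp_apply]
    rw [hmirror i, pow_add]
    ring
  have hvarT' : var T' = sv (alt (clist T)) := by
    rw [var_eq_sv, hclistT', sv_map_mul_left (pow_ne_zero N (by norm_num : (-1:ℝ) ≠ 0))]
  -- lower bound for T' : card mn ≤ var T'
  have hT'split : T' = (C c * (mp.map gp).prod) * ((mn.map (fun r => -r)).map g).prod := by
    rw [hT'def, hmsum, Multiset.map_add, Multiset.prod_add]
    have e : mn.map gp = (mn.map (fun r => -r)).map g := by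
      rw [Multiset.map_map]
      apply Multiset.map_congr rfl
      intro r _
      simp [hgdef, hgpdef, sub_neg_eq_add]
    rw [e]
    ring
  have hgpne : ∀ s : Multiset ℝ, (s.map gp).prod ≠ 0 := by
    intro s
    apply Multiset.prod_ne_zero
    intro h
    rcases Multiset.mem_map.mp h with ⟨r, -, hr⟩
    rw [hgpdef] at hr
    have : X - C (-r) ≠ 0 := X_sub_C_ne_zero (-r)
    rw [map_neg, sub_neg_eq_add] at this
    exact this hr
  have lower2 : Multiset.card mn ≤ var T' := by
    have hpos : ∀ r ∈ mn.map (fun r => -r), 0 < r := by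
      intro r hr
      rcases Multiset.mem_map.mp hr with ⟨r', hr', rfl⟩
      exact neg_pos.mpr (hmn_neg r' hr')
    have := var_prod_pos (mn.map (fun r => -r)) hpos (C c * (mp.map gp).prod)
      (mul_ne_zero (C_ne_zero.mpr hc) (hgpne mp))
    rw [← hT'split, Multiset.card_map] at this
    omega
  -- upper bound
  have hlen : (clist T).length = N + 1 := by
    rw [clist, List.length_map, List.length_range, hdegT]
  have upper := sv_add_sv_alt (clist T).length (clist T) le_rfl
  rw [hlen] at upper
  have hNsum : N = Multiset.card mn + Multiset.card mp := by
    rw [hN, hmsum, Multiset.card_add]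
  have hvarTsv : var T = sv (clist T) := var_eq_sv T
  have hgoal : (A.roots.filter fun x => 0 < x).card = Multiset.card mp := rfl
  rw [hgoal, hvarA]
  rw [hvarT'] at lower2
  omega
end bridge
end
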